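/- arXiv:2411.06555 — 3 statements merged into one kernel-verified Lean document; each statement's English description precedes it below -/
import Mathlib

section
/- Let 1 ≤ r, t < ∞ and m ∈ ℕ. Let f, g ∈ L^∞_c(ℝⁿ), b ∈ L¹_loc(ℝⁿ), and let Q be a cube in ℝⁿ. For 0 ≤ k ≤ m define c_k := ⟨|b − ⟨b⟩_Q|^{m−k} |f|⟩_{r,Q} · ⟨|b − ⟨b⟩_Q|^{k} |g|⟩_{t,Q}. Then c_k ≤ c_0 + c_m for every 0 ≤ k ≤ m. -/
open MeasureTheory Set ENNReal

noncomputable section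

namespace Frac

/-- A half-open cube in `ℝⁿ`, given by its center and half-sidelength. -/
structure Cube (n : ℕ) where
  c : Fin n → ℝ
  h : ℝ
  h_pos : 0 < h

namespace Cube

variable {n : ℕ}

/-- The underlying (half-open) set of a cube. -/
def set (Q : Cube n) : Set (Fin n → ℝ) :=
  {y | ∀ i, Q.c i - Q.h ≤ y i ∧ y i < Q.c i + Q.h}

/-- The concentric dilate `3Q`. -/
def three (Q : Cube n) : Cube n :=
  ⟨Q.c, 3 * Q.h, by have := Q.h_pos; linarith⟩

/-- The sidelength `ℓ(Q)`. -/
def side (Q : Cube n) : ℝ := 2 * Q.h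

/-- The volume `|Q|` of a cube. -/
def vol (Q : Cube n) : ℝ≥0∞ := volume Q.set

/-- One of the `2ⁿ` dyadic children of a cube. -/
def child (Q : Cube n) (ε : Fin n → Bool) : Cube n :=
  ⟨fun i => Q.c i + (if ε i then Q.h / 2 else -(Q.h / 2)), Q.h / 2, by
    have := Q.h_pos; linarith⟩

/-- The normalized restriction of Lebesgue measure to a cube. -/
def nmeas (Q : Cube n) : Measure (Fin n → ℝ) := (Q.vol)⁻¹ • volume.restrict Q.set

end Cube

variable {n : ℕ}

/-- `R` is a dyadic child of `Q`. -/
def childRel (Q R : Cube n) : Prop := ∃ ε, R = Q.child ε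

/-- `R` is a dyadic descendant of `Q` (possibly `Q` itself). -/
def descendant (Q R : Cube n) : Prop := Relation.ReflTransGen childRel Q R

/-- A dyadic lattice in `ℝⁿ`. -/
structure IsDyadicLattice (D : Set (Cube n)) : Prop where
  mem_of_descendant : ∀ Q ∈ D, ∀ R : Cube n, descendant Q R → R ∈ D
  common_ancestor : ∀ Q ∈ D, ∀ Q' ∈ D, ∃ R ∈ D, descendant R Q ∧ descendant R Q'
  exists_contains : ∀ K : Set (Fin n → ℝ), IsCompact K → ∃ Q ∈ D, K ⊆ Q.set

/-- An `η`-sparse family of cubes. -/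
def IsSparse (η : ℝ) (S : Set (Cube n)) : Prop :=
  ∃ E : Cube n → Set (Fin n → ℝ),
    (∀ Q ∈ S, MeasurableSet (E Q) ∧ E Q ⊆ Q.set ∧ ENNReal.ofReal η * Q.vol ≤ volume (E Q)) ∧
    (∀ Q ∈ S, ∀ Q' ∈ S, Q ≠ Q' → Disjoint (E Q) (E Q'))

/-- The average `⟨f⟩_{r,Q} = (|Q|⁻¹∫_Q |f|^r)^{1/r}`, with the `essSup` interpretation
for `r = ∞`. -/
def avg (r : ℝ≥0∞) (Q : Cube n) (f : (Fin n → ℝ) → ℝ) : ℝ≥0∞ :=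
  eLpNorm f r Q.nmeas

/-- The (real-valued) average `⟨b⟩_Q`. -/
def avgR (Q : Cube n) (b : (Fin n → ℝ) → ℝ) : ℝ :=
  (∫ y in Q.set, b y) / (Q.vol).toReal

/-- The oscillation `osc_s(h; Q)`. -/
def osc (s : ℝ≥0∞) (Q : Cube n) (h : (Fin n → ℝ) → ℝ) : ℝ≥0∞ :=
  eLpNorm (fun p : ((Fin n → ℝ) × (Fin n → ℝ)) => h p.1 - h p.2) s (Q.nmeas.prod Q.nmeas)

/-- The sharp grand maximal truncation operator `𝓜^#_{T,s}`. -/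
def Msharp (T : ((Fin n → ℝ) → ℝ) → ((Fin n → ℝ) → ℝ)) (s : ℝ≥0∞)
    (f : (Fin n → ℝ) → ℝ) (x : Fin n → ℝ) : ℝ≥0∞ :=
  ⨆ (Q : Cube n) (_ : x ∈ Q.set), osc s Q (T ((Q.three.set)ᶜ.indicator f))

/-- `T` is a sublinear operator. -/
def Sublinear (T : ((Fin n → ℝ) → ℝ) → ((Fin n → ℝ) → ℝ)) : Prop :=
  (∀ f g : (Fin n → ℝ) → ℝ, ∀ᵐ x : Fin n → ℝ, |T (f + g) x| ≤ |T f x| + |T g x|) ∧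
  (∀ (c : ℝ) (f : (Fin n → ℝ) → ℝ), ∀ᵐ x : Fin n → ℝ, |T (fun y => c * f y) x| = |c| * |T f x|)

/-- Locally weak `L^{p₀} → L^{p₀ n/(n - a p₀)}` boundedness of an (`ℝ≥0∞`-valued)
operator `U`, with associated non-increasing function `φ : (0,1) → [0,∞)`. -/
def LocWeak (n : ℕ) (p₀ a : ℝ)
    (U : ((Fin n → ℝ) → ℝ) → ((Fin n → ℝ) → ℝ≥0∞)) (φ : ℝ → ℝ) : Prop :=
  (∀ t ∈ Ioo (0 : ℝ) 1, 0 ≤ φ t) ∧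
  (∀ t ∈ Ioo (0 : ℝ) 1, ∀ t' ∈ Ioo (0 : ℝ) 1, t ≤ t' → φ t' ≤ φ t) ∧
  ∀ (Q : Cube n) (f : (Fin n → ℝ) → ℝ),
    avg (ENNReal.ofReal p₀) Q (Q.set.indicator f) < ∞ →
    ∀ t ∈ Ioo (0 : ℝ) 1,
      volume {x ∈ Q.set |
          ENNReal.ofReal (φ t) * avg (ENNReal.ofReal p₀) Q (Q.set.indicator f) *
              Q.vol ^ (a / n) < U (Q.set.indicator f) x}
        ≤ ENNReal.ofReal t * Q.vol

/-- `|T f|`, viewed as an `ℝ≥0∞`-valued operator. -/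
def eabs (T : ((Fin n → ℝ) → ℝ) → ((Fin n → ℝ) → ℝ)) :
    ((Fin n → ℝ) → ℝ) → ((Fin n → ℝ) → ℝ≥0∞) :=
  fun f x => ENNReal.ofReal |T f x|

/-- The iterated commutator `T_b^m f (x) = T ((b(x) - b(·))^m f)(x)` (so `T_b^0 = T`). -/
def comm (T : ((Fin n → ℝ) → ℝ) → ((Fin n → ℝ) → ℝ))
    (b : (Fin n → ℝ) → ℝ) (m : ℕ) (f : (Fin n → ℝ) → ℝ) : (Fin n → ℝ) → ℝ :=
  fun x => T (fun y => (b x - b y) ^ m * f y) x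

/-- `w(Q) = ∫_Q w` for a weight `w`. -/
def wInt (w : (Fin n → ℝ) → ℝ) (Q : Cube n) : ℝ≥0∞ :=
  ∫⁻ y in Q.set, ENNReal.ofReal (w y)

/-- The weighted norm `‖f‖_{L^p(w)}`, `p ∈ (0,∞]`. -/
def wNorm (p : ℝ≥0∞) (w : (Fin n → ℝ) → ℝ) (f : (Fin n → ℝ) → ℝ) : ℝ≥0∞ :=
  eLpNorm f p (volume.withDensity fun x => ENNReal.ofReal (w x))

/-- The weighted `L^p`-norm of an `ℝ≥0∞`-valued function. -/
def wNormE (p : ℝ) (w : (Fin n → ℝ) → ℝ) (g : (Fin n → ℝ) → ℝ≥0∞) : ℝ≥0∞ :=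
  (∫⁻ x, g x ^ p * ENNReal.ofReal (w x)) ^ (1 / p)

/-- The Hardy–Littlewood maximal operator of an `ℝ≥0∞`-valued function. -/
def emax (g : (Fin n → ℝ) → ℝ≥0∞) (x : Fin n → ℝ) : ℝ≥0∞ :=
  ⨆ (Q : Cube n) (_ : x ∈ Q.set), (Q.vol)⁻¹ * ∫⁻ y in Q.set, g y

/-- The Fujii–Wilson `A_∞` constant `[w]_{A_∞}`. -/
def Ainf (w : (Fin n → ℝ) → ℝ) : ℝ≥0∞ :=
  ⨆ Q : Cube n,
    (wInt w Q)⁻¹ *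
      ∫⁻ x in Q.set, emax (Q.set.indicator fun y => ENNReal.ofReal (w y)) x

/-- The Muckenhoupt constant `[w]_{A_t}`. -/
def Amuck (t : ℝ) (w : (Fin n → ℝ) → ℝ) : ℝ≥0∞ :=
  ⨆ Q : Cube n,
    ((Q.vol)⁻¹ * wInt w Q) *
      ((Q.vol)⁻¹ * wInt (fun x => w x ^ ((1 : ℝ) - t / (t - 1))) Q) ^ (t - 1)

/-- The reverse Hölder constant `[w]_{RH_r}`. -/
def RHconst (r : ℝ) (w : (Fin n → ℝ) → ℝ) : ℝ≥0∞ :=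
  ⨆ Q : Cube n, avg (ENNReal.ofReal r) Q w / ((Q.vol)⁻¹ * wInt w Q)

/-- The two-weight constant `[w,σ]_{A^a_{β,γ}} = sup_Q |Q|^a w(Q)^β σ(Q)^γ`. -/
def A2 (a β γ : ℝ) (w σ : (Fin n → ℝ) → ℝ) : ℝ≥0∞ :=
  ⨆ Q : Cube n, Q.vol ^ a * wInt w Q ^ β * wInt σ Q ^ γ

/-- The Bloom weighted BMO seminorm `‖b‖_{BMO_ν}`. -/
def bmoW (ν b : (Fin n → ℝ) → ℝ) : ℝ≥0∞ :=
  ⨆ Q : Cube n, (wInt ν Q)⁻¹ * ∫⁻ x in Q.set, ENNReal.ofReal |b x - avgR Q b|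

/-- The BMO seminorm `‖b‖_{BMO}`. -/
def bmo (b : (Fin n → ℝ) → ℝ) : ℝ≥0∞ :=
  ⨆ Q : Cube n, (Q.vol)⁻¹ * ∫⁻ x in Q.set, ENNReal.ofReal |b x - avgR Q b|

/-- The conjugate exponent of `q ∈ [1,∞]`, as a real number (`1` when `q = ∞`). -/
def econjR (q : ℝ≥0∞) : ℝ := if q = ∞ then 1 else q.toReal / (q.toReal - 1)

/-- The conjugate exponent of `q ∈ [1,∞]`, as an element of `[1,∞]`. -/
def econj (q : ℝ≥0∞) : ℝ≥0∞ := if q = ∞ then 1 else ENNReal.ofReal (econjR q)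

/-- The conjugate exponent of a real `q ≥ 1`, as an element of `[1,∞]` (`∞` when `q = 1`). -/
def rconj (q : ℝ) : ℝ≥0∞ := if q = 1 then ∞ else ENNReal.ofReal (q / (q - 1))

/-- `1/q`, for `q ∈ (0,∞]` (`0` when `q = ∞`). -/
def invE (q : ℝ≥0∞) : ℝ := if q = ∞ then 0 else 1 / q.toReal

end Frac


lemma geom_le_add (x y : ℝ≥0∞) {θ : ℝ} (h0 : 0 ≤ θ) (h1 : θ ≤ 1) :
    x ^ (1 - θ) * y ^ θ ≤ x + y := by
  calc x ^ (1 - θ) * y ^ θ ≤ (x ⊔ y) ^ (1 - θ) * (x ⊔ y) ^ θ := by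
        gcongr <;> simp [le_max_left, le_max_right, h1]
    _ = (x ⊔ y) ^ ((1 - θ) + θ) := (ENNReal.rpow_add_of_nonneg _ _ (by linarith) h0).symm
    _ = x ⊔ y := by norm_num
    _ ≤ x + y := sup_le le_self_add le_add_self

lemma lint_interp {α : Type*} [MeasurableSpace α] (μ : Measure α)
    (a c : α → ℝ≥0∞) (ha : AEMeasurable a μ) (hc : AEMeasurable c μ)
    (r : ℝ) (hr : 0 < r) (k m : ℕ) (hk0 : 0 < k) (hkm : k < m) :
    ∫⁻ y, (a y ^ (m - k) * c y) ^ r ∂μ ≤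
      (∫⁻ y, (a y ^ m * c y) ^ r ∂μ) ^ (((m - k : ℕ) : ℝ) / m) *
      (∫⁻ y, c y ^ r ∂μ) ^ ((k : ℝ) / m) := by
  have hm0 : (0:ℝ) < m := by exact_mod_cast hk0.trans hkm
  have hmk0 : (0:ℝ) < ((m - k : ℕ) : ℝ) := by
    have : 0 < m - k := Nat.sub_pos_of_lt hkm
    exact_mod_cast this
  have hk0' : (0:ℝ) < (k:ℝ) := by exact_mod_cast hk0
  have hcast : ((m - k : ℕ) : ℝ) = (m : ℝ) - k := Nat.cast_sub hkm.le
  set θ1 : ℝ := ((m - k : ℕ) : ℝ) / m with hθ1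
  set θ2 : ℝ := (k : ℝ) / m with hθ2
  have hθ1pos : 0 < θ1 := div_pos hmk0 hm0
  have hθ2pos : 0 < θ2 := div_pos hk0' hm0
  have h1 : (0:ℝ) ≤ r * θ1 := by positivity
  have h2 : (0:ℝ) ≤ r * θ2 := by positivity
  have em : (↑m : ℝ) * (r * θ1) = ((m - k : ℕ) : ℝ) * r := by
    rw [hθ1]; field_simp
  have ec : r * θ1 + r * θ2 = r := by
    rw [hθ1, hθ2, hcast]; field_simp; ring
  have key : ∀ y, (a y ^ (m - k) * c y) ^ r =
      ((a y ^ m * c y) ^ r) ^ θ1 * (c y ^ r) ^ θ2 := by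
    intro y
    set A := a y; set C := c y
    rw [← ENNReal.rpow_natCast A (m - k), ← ENNReal.rpow_natCast A m,
      ENNReal.mul_rpow_of_nonneg _ _ hr.le, ← ENNReal.rpow_mul A,
      ← ENNReal.rpow_mul (A ^ (↑m:ℝ) * C) r θ1, ← ENNReal.rpow_mul C r θ2]
    symm
    calc (A ^ (↑m:ℝ) * C) ^ (r * θ1) * C ^ (r * θ2)
        = (A ^ (↑m:ℝ)) ^ (r * θ1) * C ^ (r * θ1) * C ^ (r * θ2) := by
          rw [ENNReal.mul_rpow_of_nonneg _ _ h1]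
      _ = A ^ ((↑m:ℝ) * (r * θ1)) * (C ^ (r * θ1) * C ^ (r * θ2)) := by
          rw [← ENNReal.rpow_mul, mul_assoc]
      _ = A ^ (((m - k : ℕ) : ℝ) * r) * C ^ (r * θ1 + r * θ2) := by
          rw [em, ENNReal.rpow_add_of_nonneg _ _ h1 h2]
      _ = A ^ (((m - k : ℕ) : ℝ) * r) * C ^ r := by
          rw [ec]
  calc ∫⁻ y, (a y ^ (m - k) * c y) ^ r ∂μ
      = ∫⁻ y, ((fun y => ((a y ^ m * c y) ^ r) ^ θ1) *
          (fun y => (c y ^ r) ^ θ2)) y ∂μ := by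
        exact lintegral_congr fun y => key y
    _ ≤ (∫⁻ y, (((a y ^ m * c y) ^ r) ^ θ1) ^ ((m:ℝ) / ((m - k : ℕ) : ℝ)) ∂μ) ^
            (1 / ((m:ℝ) / ((m - k : ℕ) : ℝ))) *
        (∫⁻ y, ((c y ^ r) ^ θ2) ^ ((m:ℝ) / (k:ℝ)) ∂μ) ^ (1 / ((m:ℝ) / (k:ℝ))) := by
        apply ENNReal.lintegral_mul_le_Lp_mul_Lq μ
        · constructor
          · rw [inv_div, inv_div, inv_one, ← add_div, hcast, sub_add_cancel, div_self hm0.ne']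
          · exact div_pos hm0 hmk0
          · exact div_pos hm0 hk0'
        · exact (((ha.pow_const m).mul hc).pow_const r).pow_const θ1
        · exact (hc.pow_const r).pow_const θ2
    _ = (∫⁻ y, (a y ^ m * c y) ^ r ∂μ) ^ θ1 * (∫⁻ y, c y ^ r ∂μ) ^ θ2 := by
        have e1 : θ1 * ((m:ℝ) / ((m - k : ℕ) : ℝ)) = 1 := by
          rw [hθ1]; field_simp
        have e2 : θ2 * ((m:ℝ) / (k:ℝ)) = 1 := by
          rw [hθ2]; field_simp
        have i1 : 1 / ((m:ℝ) / ((m - k : ℕ) : ℝ)) = θ1 := by rw [hθ1]; field_simp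
        have i2 : 1 / ((m:ℝ) / (k:ℝ)) = θ2 := by rw [hθ2]; field_simp
        rw [i1, i2]
        congr 1
        · congr 1
          apply lintegral_congr
          intro y
          rw [← ENNReal.rpow_mul, ← ENNReal.rpow_mul, e1, mul_one]
        · congr 1
          apply lintegral_congr
          intro y
          rw [← ENNReal.rpow_mul, e2, ENNReal.rpow_one]

namespace Frac

lemma avg_interp {n : ℕ} (Q : Cube n) {r : ℝ} (hr : 0 < r) (h f : (Fin n → ℝ) → ℝ)
    (hh : AEMeasurable h Q.nmeas) (hf : AEMeasurable f Q.nmeas)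
    {k m : ℕ} (hk0 : 0 < k) (hkm : k < m) :
    avg (ENNReal.ofReal r) Q (fun y => |h y| ^ (m - k) * |f y|) ≤
      (avg (ENNReal.ofReal r) Q (fun y => |h y| ^ m * |f y|)) ^ (((m - k : ℕ) : ℝ) / m) *
      (avg (ENNReal.ofReal r) Q f) ^ ((k : ℝ) / m) := by
  have hp0 : ENNReal.ofReal r ≠ 0 := by simp [ENNReal.ofReal_eq_zero, not_le, hr]
  have hpt : ENNReal.ofReal r ≠ ∞ := ENNReal.ofReal_ne_top
  have htr : (ENNReal.ofReal r).toReal = r := ENNReal.toReal_ofReal hr.le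
  unfold avg
  rw [eLpNorm_eq_lintegral_rpow_enorm_toReal hp0 hpt, eLpNorm_eq_lintegral_rpow_enorm_toReal hp0 hpt,
    eLpNorm_eq_lintegral_rpow_enorm_toReal hp0 hpt, htr]
  set a : (Fin n → ℝ) → ℝ≥0∞ := fun y => (‖h y‖₊ : ℝ≥0∞) with ha_def
  set c : (Fin n → ℝ) → ℝ≥0∞ := fun y => (‖f y‖₊ : ℝ≥0∞) with hc_def
  have hnorm : ∀ (j : ℕ) (y : Fin n → ℝ),
      ((‖|h y| ^ j * |f y|‖₊ : ℝ≥0∞)) = a y ^ j * c y := by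
    intro j y
    rw [nnnorm_mul, nnnorm_pow, Real.nnnorm_abs, Real.nnnorm_abs]
    push_cast
    rfl
  have key := lint_interp Q.nmeas a c (hh.enorm) (hf.enorm) r hr k m hk0 hkm
  calc (∫⁻ y, (‖|h y| ^ (m - k) * |f y|‖₊ : ℝ≥0∞) ^ r ∂Q.nmeas) ^ (1 / r)
      = (∫⁻ y, (a y ^ (m - k) * c y) ^ r ∂Q.nmeas) ^ (1 / r) := by
        congr 1; exact lintegral_congr fun y => by rw [hnorm]
    _ ≤ ((∫⁻ y, (a y ^ m * c y) ^ r ∂Q.nmeas) ^ (((m - k : ℕ) : ℝ) / m) *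
          (∫⁻ y, c y ^ r ∂Q.nmeas) ^ ((k : ℝ) / m)) ^ (1 / r) :=
        ENNReal.rpow_le_rpow key (by positivity)
    _ = ((∫⁻ y, (‖|h y| ^ m * |f y|‖₊ : ℝ≥0∞) ^ r ∂Q.nmeas) ^ (1 / r)) ^
            (((m - k : ℕ) : ℝ) / m) *
        ((∫⁻ y, (‖f y‖₊ : ℝ≥0∞) ^ r ∂Q.nmeas) ^ (1 / r)) ^ ((k : ℝ) / m) := by
        rw [ENNReal.mul_rpow_of_nonneg _ _ (by positivity : (0:ℝ) ≤ 1 / r),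
          ← ENNReal.rpow_mul, ← ENNReal.rpow_mul, ← ENNReal.rpow_mul, ← ENNReal.rpow_mul,
          mul_comm (((m - k : ℕ) : ℝ) / m) (1 / r), mul_comm ((k : ℝ) / m) (1 / r)]
        congr 2
        exact lintegral_congr fun y => by rw [hnorm]

end Frac

namespace Frac

/-- For `c_k := ⟨|b - ⟨b⟩_Q|^{m-k}|f|⟩_{r,Q} ⟨|b - ⟨b⟩_Q|^{k}|g|⟩_{t,Q}` one has
`c_k ≤ c_0 + c_m`. -/
theorem ck_le_c0_add_cm (n : ℕ) (r t : ℝ) (hr : 1 ≤ r) (ht : 1 ≤ t) (m : ℕ) (hm : 1 ≤ m)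
    (f g b : (Fin n → ℝ) → ℝ)
    (hf : MemLp f ∞ volume) (hf' : HasCompactSupport f)
    (hg : MemLp g ∞ volume) (hg' : HasCompactSupport g)
    (hb : LocallyIntegrable b volume)
    (Q : Cube n) (k : ℕ) (hk : k ≤ m) :
    avg (ENNReal.ofReal r) Q (fun y => |b y - avgR Q b| ^ (m - k) * |f y|) *
        avg (ENNReal.ofReal t) Q (fun y => |b y - avgR Q b| ^ k * |g y|) ≤
      avg (ENNReal.ofReal r) Q (fun y => |b y - avgR Q b| ^ m * |f y|) *
          avg (ENNReal.ofReal t) Q g +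
        avg (ENNReal.ofReal r) Q f *
          avg (ENNReal.ofReal t) Q (fun y => |b y - avgR Q b| ^ m * |g y|) := by
  -- abbreviations
  set h : (Fin n → ℝ) → ℝ := fun y => b y - avgR Q b with hh_def
  have hr0 : (0:ℝ) < r := lt_of_lt_of_le one_pos hr
  have ht0 : (0:ℝ) < t := lt_of_lt_of_le one_pos ht
  have habs_g : avg (ENNReal.ofReal t) Q (fun y => |g y|) = avg (ENNReal.ofReal t) Q g := by
    unfold avg
    rw [show (fun y => |g y|) = fun y => ‖g y‖ by funext y; rw [Real.norm_eq_abs]]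
    exact eLpNorm_norm g
  have habs_f : avg (ENNReal.ofReal r) Q (fun y => |f y|) = avg (ENNReal.ofReal r) Q f := by
    unfold avg
    rw [show (fun y => |f y|) = fun y => ‖f y‖ by funext y; rw [Real.norm_eq_abs]]
    exact eLpNorm_norm f
  rcases Nat.eq_zero_or_pos k with hk0 | hk0
  · subst hk0
    simp only [Nat.sub_zero, pow_zero, one_mul]
    rw [habs_g]
    exact le_self_add
  rcases eq_or_lt_of_le hk with hkm | hkm
  · subst hkm
    simp only [Nat.sub_self, pow_zero, one_mul]
    rw [habs_f]
    exact le_add_self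
  -- measurability
  have hbm : AEMeasurable h Q.nmeas := by
    have : AEMeasurable b Q.nmeas :=
      ((hb.aestronglyMeasurable.aemeasurable).restrict).smul_measure _
    exact this.sub aemeasurable_const
  have hfm : AEMeasurable f Q.nmeas :=
    ((hf.aestronglyMeasurable.aemeasurable).restrict).smul_measure _
  have hgm : AEMeasurable g Q.nmeas :=
    ((hg.aestronglyMeasurable.aemeasurable).restrict).smul_measure _
  have hmk0 : 0 < m - k := Nat.sub_pos_of_lt hkm
  have hmkm : m - k < m := Nat.sub_lt (hk0.trans hkm) hk0
  have Hf := avg_interp Q hr0 h f hbm hfm hk0 hkm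
  have Hg := avg_interp Q ht0 h g hbm hgm hmk0 hmkm
  rw [Nat.sub_sub_self hk] at Hg
  set A := avg (ENNReal.ofReal r) Q (fun y => |h y| ^ m * |f y|) with hA
  set B := avg (ENNReal.ofReal r) Q f with hB
  set C := avg (ENNReal.ofReal t) Q (fun y => |h y| ^ m * |g y|) with hC
  set D := avg (ENNReal.ofReal t) Q g with hD
  set s1 : ℝ := ((m - k : ℕ) : ℝ) / m with hs1
  set s2 : ℝ := (k : ℝ) / m with hs2
  have hm0 : (0:ℝ) < m := by exact_mod_cast hk0.trans hkm
  have hs1n : 0 ≤ s1 := by positivity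
  have hs2n : 0 ≤ s2 := by positivity
  have hs12 : s1 = 1 - s2 := by
    rw [hs1, hs2, Nat.cast_sub hkm.le]
    field_simp
  have hs2le : s2 ≤ 1 := by
    rw [hs2, div_le_one hm0]
    exact_mod_cast hkm.le
  calc avg (ENNReal.ofReal r) Q (fun y => |h y| ^ (m - k) * |f y|) *
        avg (ENNReal.ofReal t) Q (fun y => |h y| ^ k * |g y|)
      ≤ (A ^ s1 * B ^ s2) * (C ^ s2 * D ^ s1) := mul_le_mul' Hf Hg
    _ = (A * D) ^ s1 * (B * C) ^ s2 := by
        rw [ENNReal.mul_rpow_of_nonneg A D hs1n, ENNReal.mul_rpow_of_nonneg B C hs2n]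
        ring
    _ ≤ A * D + B * C := by
        rw [hs12]
        exact geom_le_add _ _ hs2n hs2le


end Frac
end
end

section
/- (Three lattice theorem) For every dyadic lattice 𝒟 in ℝⁿ there exist 3ⁿ dyadic lattices 𝒟¹, …, 𝒟^{3ⁿ} such that {3Q : Q ∈ 𝒟} = ⋃_{j=1}^{3ⁿ} 𝒟ʲ, and for every cube Q ∈ 𝒟 and every j = 1, …, 3ⁿ there exists a unique cube R ∈ 𝒟ʲ with sidelength ℓ(R) = 3ℓ(Q) containing Q. -/
open MeasureTheory Set ENNReal

noncomputable section

namespace Frac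

variable {n : ℕ}

/-- The lower corner of a cube. -/
def X (Q : Cube n) (i : Fin n) : ℝ := Q.c i - Q.h

lemma mem_set_iff {Q : Cube n} {y : Fin n → ℝ} :
    y ∈ Q.set ↔ ∀ i, X Q i ≤ y i ∧ y i < X Q i + 2 * Q.h := by
  unfold Cube.set X
  constructor <;> intro h i <;> obtain ⟨h1, h2⟩ := h i <;> constructor <;> linarith

lemma cube_eq {Q R : Cube n} (hh : Q.h = R.h) (hX : ∀ i, X Q i = X R i) : Q = R := by
  obtain ⟨c, h, _⟩ := Q; obtain ⟨c', h', _⟩ := R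
  simp only [X] at hX hh
  subst hh
  simp only [Cube.mk.injEq, and_true]
  funext i; have := hX i; linarith

lemma h_child (Q : Cube n) (ε : Fin n → Bool) : (Q.child ε).h = Q.h / 2 := rfl

lemma X_child (Q : Cube n) (ε : Fin n → Bool) (i : Fin n) :
    X (Q.child ε) i = X Q i + (if ε i then Q.h else 0) := by
  simp only [X, Cube.child]
  split <;> ring

/-- `Q` sits at grid position `z` (in units of its own sidelength) at depth `k` inside `P`. -/
def Al (P Q : Cube n) (k : ℕ) (z : Fin n → ℤ) : Prop :=
  Q.h = P.h / 2 ^ k ∧ ∀ i, X Q i = X P i + 2 * Q.h * z i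

lemma descendant_al {P Q : Cube n} (h : descendant P Q) :
    ∃ k z, Al P Q k z ∧ ∀ i, (0:ℤ) ≤ z i ∧ z i < 2 ^ k := by
  induction h with
  | refl => exact ⟨0, 0, ⟨by simp, by simp⟩, by simp⟩
  | tail _ hbc ih =>
    obtain ⟨k, z, ⟨hh, hX⟩, hb⟩ := ih
    obtain ⟨ε, rfl⟩ := hbc
    refine ⟨k + 1, fun i => 2 * z i + (if ε i then 1 else 0), ⟨?_, fun i => ?_⟩, fun i => ?_⟩
    · rw [h_child, hh]; ring
    · rw [X_child, hX i, h_child]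
      rcases hε : ε i with _ | _ <;> simp only [hε, if_true, if_false] <;> push_cast <;> ring
    · have := hb i; rcases ε i <;> simp <;> omega

end Frac
namespace Frac

variable {n : ℕ}

lemma al_descendant : ∀ (k : ℕ) (P Q : Cube n) (z : Fin n → ℤ), Al P Q k z →
    (∀ i, (0:ℤ) ≤ z i ∧ z i < 2 ^ k) → descendant P Q := by
  intro k
  induction k with
  | zero =>
    intro P Q z ⟨hh, hX⟩ hb
    have : Q = P := by
      refine cube_eq (by simpa using hh) fun i => ?_
      have h0 : z i = 0 := by have := hb i; omega
      rw [hX i, h0]; push_cast; ring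
    rw [this]
    exact Relation.ReflTransGen.refl
  | succ k ih =>
    intro P Q z ⟨hh, hX⟩ hb
    set ε : Fin n → Bool := fun i => decide ((2:ℤ) ^ k ≤ z i) with hε
    have hPh : P.h = 2 ^ (k + 1) * Q.h := by
      rw [hh]; field_simp
    refine Relation.ReflTransGen.head ⟨ε, rfl⟩ (ih (P.child ε) Q (fun i => z i - if ε i then 2 ^ k else 0) ⟨?_, fun i => ?_⟩ fun i => ?_)
    · rw [h_child, hh]; ring
    · rw [X_child, hX i]
      by_cases h2k : (2:ℤ) ^ k ≤ z i <;> simp [hε, h2k, hPh] <;> push_cast <;> ring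
    · have := hb i
      by_cases h2k : (2:ℤ) ^ k ≤ z i <;> simp [hε, h2k] <;> omega

lemma set_subset_of_al {P Q : Cube n} {k : ℕ} {z : Fin n → ℤ} (h : Al P Q k z)
    (hb : ∀ i, (0:ℤ) ≤ z i ∧ z i < 2 ^ k) : Q.set ⊆ P.set := by
  obtain ⟨hh, hX⟩ := h
  intro y hy
  rw [mem_set_iff] at hy ⊢
  intro i
  obtain ⟨h1, h2⟩ := hy i
  have hz1 : (0:ℝ) ≤ (z i : ℝ) := by exact_mod_cast (hb i).1
  have hz2 : (z i : ℝ) + 1 ≤ 2 ^ k := by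
    have : z i + 1 ≤ 2 ^ k := (hb i).2
    exact_mod_cast this
  have hPh : P.h = 2 ^ k * Q.h := by rw [hh]; field_simp
  have hq := Q.h_pos
  rw [hX i] at h1 h2
  constructor
  · nlinarith
  · rw [hPh]; nlinarith

lemma center_mem (Q : Cube n) : Q.c ∈ Q.set := fun i => ⟨by linarith [Q.h_pos], by linarith [Q.h_pos]⟩

lemma desc_subset {P Q : Cube n} (h : descendant P Q) : Q.set ⊆ P.set := by
  obtain ⟨k, z, hal, hb⟩ := descendant_al h
  exact set_subset_of_al hal hb

lemma eq_of_same_size {S Q R : Cube n} (h1 : descendant S Q) (h2 : descendant S R)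
    (hh : Q.h = R.h) (hne : (Q.set ∩ R.set).Nonempty) : Q = R := by
  obtain ⟨k1, z1, ⟨hh1, hX1⟩, hb1⟩ := descendant_al h1
  obtain ⟨k2, z2, ⟨hh2, hX2⟩, hb2⟩ := descendant_al h2
  obtain ⟨y, hyQ, hyR⟩ := hne
  refine cube_eq hh fun i => ?_
  rw [mem_set_iff] at hyQ hyR
  obtain ⟨a1, a2⟩ := hyQ i
  obtain ⟨b1, b2⟩ := hyR i
  have hq := Q.h_pos
  have key : z1 i = z2 i := by
    have d1 : (z1 i : ℝ) < z2 i + 1 := by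
      rw [hX1 i] at a1; rw [hX2 i, ← hh] at b2; nlinarith
    have d2 : (z2 i : ℝ) < z1 i + 1 := by
      rw [hX2 i, ← hh] at b1; rw [hX1 i] at a2; nlinarith
    have d1' : z1 i < z2 i + 1 := by exact_mod_cast d1
    have d2' : z2 i < z1 i + 1 := by exact_mod_cast d2
    omega
  rw [hX1 i, hX2 i, key, hh]

end Frac
namespace Frac

variable {n : ℕ} {D : Set (Cube n)}

lemma set_subset_Icc (Q : Cube n) : Q.set ⊆ Set.Icc (X Q) (fun i => X Q i + 2 * Q.h) := by
  intro y hy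
  rw [mem_set_iff] at hy
  rw [Set.mem_Icc]
  exact ⟨fun i => (hy i).1, fun i => le_of_lt (hy i).2⟩

lemma mem_of_al_int (hD : IsDyadicLattice D) {P : Cube n} (hP : P ∈ D) (Q : Cube n)
    (k : ℕ) (z : Fin n → ℤ) (hh : Q.h = P.h / 2 ^ k)
    (hX : ∀ i, X Q i = X P i + 2 * Q.h * z i) : Q ∈ D := by
  obtain ⟨S, hS, hKS⟩ := hD.exists_contains _ (isCompact_Icc (a := X Q) (b := fun i => X Q i + 2 * Q.h))
  obtain ⟨T, hT, hTP, hTS⟩ := hD.common_ancestor P hP S hS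
  obtain ⟨kp, zp, ⟨hph, hpX⟩, hpb⟩ := descendant_al hTP
  have hq := Q.h_pos
  have hQT : Q.set ⊆ T.set := fun y hy =>
    desc_subset hTS (hKS (set_subset_Icc Q hy))
  have hPh : P.h = 2 ^ k * Q.h := by rw [hh]; field_simp
  have hTh : T.h = 2 ^ (kp + k) * Q.h := by
    have : P.h = T.h / 2 ^ kp := hph
    rw [hPh] at this
    field_simp at this ⊢
    rw [pow_add]; linarith
  set w : Fin n → ℤ := fun i => 2 ^ k * zp i + z i with hw
  have hXw : ∀ i, X Q i = X T i + 2 * Q.h * w i := by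
    intro i
    rw [hX i, hpX i, hPh, hw]; push_cast; ring
  have hmem1 : X Q ∈ T.set := hQT (mem_set_iff.2 fun i => ⟨le_refl _, by linarith⟩)
  have hmem2 : (fun i => X Q i + Q.h) ∈ T.set := hQT (mem_set_iff.2 fun i => ⟨by linarith, by linarith⟩)
  refine hD.mem_of_descendant T hT Q (al_descendant (kp + k) T Q w ⟨by rw [hTh]; field_simp, hXw⟩ fun i => ?_)
  rw [mem_set_iff] at hmem1 hmem2
  obtain ⟨a1, _⟩ := hmem1 i
  obtain ⟨_, b2⟩ := hmem2 i
  rw [hXw i] at a1 b2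
  constructor
  · have : (0:ℝ) ≤ (w i : ℝ) := by nlinarith
    exact_mod_cast this
  · have : (w i : ℝ) < ((2:ℤ) ^ (kp + k) : ℤ) := by
      rw [hTh] at b2; push_cast at b2 ⊢; nlinarith
    exact_mod_cast this

lemma exists_ancestor (hD : IsDyadicLattice D) (hn : 0 < n) {Q : Cube n} (hQ : Q ∈ D) (k : ℕ) :
    ∃ P ∈ D, P.h = 2 ^ k * Q.h ∧ descendant P Q := by
  have hq := Q.h_pos
  obtain ⟨S, hS, hKS⟩ := hD.exists_contains
    (Set.Icc (fun i => X Q i - 2 ^ (k + 1) * Q.h) (fun i => X Q i + 2 ^ (k + 1) * Q.h))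
    isCompact_Icc
  obtain ⟨T, hT, hTQ, hTS⟩ := hD.common_ancestor Q hQ S hS
  obtain ⟨d, z, ⟨hdh, hdX⟩, hdb⟩ := descendant_al hTQ
  have hTh : T.h = 2 ^ d * Q.h := by rw [hdh]; field_simp
  -- T is big
  have hkd : k ≤ d := by
    set i0 : Fin n := ⟨0, hn⟩
    have h1 : (fun i => X Q i - 2 ^ (k + 1) * Q.h) ∈ T.set :=
      desc_subset hTS (hKS (Set.mem_Icc.2 ⟨le_refl _, fun i => by
        have hp : (0:ℝ) < 2 ^ (k + 1) * Q.h := by positivity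
        show X Q i - 2 ^ (k + 1) * Q.h ≤ X Q i + 2 ^ (k + 1) * Q.h
        linarith⟩))
    have h2 : (fun i => X Q i + 2 ^ (k + 1) * Q.h) ∈ T.set :=
      desc_subset hTS (hKS (Set.mem_Icc.2 ⟨fun i => by
        have hp : (0:ℝ) < 2 ^ (k + 1) * Q.h := by positivity
        show X Q i - 2 ^ (k + 1) * Q.h ≤ X Q i + 2 ^ (k + 1) * Q.h
        linarith, le_refl _⟩))
    rw [mem_set_iff] at h1 h2
    have a1 := (h1 i0).1
    have a2 := (h2 i0).2
    have hlt : (2:ℝ) ^ (k + 1) * Q.h < T.h := by linarith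
    rw [hTh] at hlt
    have : (2:ℝ) ^ (k + 1) < 2 ^ d := by nlinarith
    have : k + 1 ≤ d := by
      by_contra hcon
      push_neg at hcon
      have : (2:ℝ) ^ d ≤ 2 ^ (k + 1) := by
        apply pow_le_pow_right₀ (by norm_num)
        omega
      linarith
    omega
  obtain ⟨e, rfl⟩ : ∃ e, d = k + e := ⟨d - k, by omega⟩
  set u : Fin n → ℤ := fun i => z i / 2 ^ k with hu
  set r : Fin n → ℤ := fun i => z i % 2 ^ k with hr
  have h2k : (0:ℤ) < 2 ^ k := by positivity
  refine ⟨⟨fun i => X T i + 2 * (2 ^ k * Q.h) * u i + 2 ^ k * Q.h, 2 ^ k * Q.h, by positivity⟩,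
    ?_, rfl, ?_⟩ <;>
    [skip; skip]
  · -- membership in D
    refine hD.mem_of_descendant T hT _ (al_descendant e T _ u ⟨?_, fun i => ?_⟩ fun i => ?_)
    · show 2 ^ k * Q.h = T.h / 2 ^ e
      rw [hTh, pow_add]; field_simp
    · show X T i + 2 * (2 ^ k * Q.h) * u i + 2 ^ k * Q.h - 2 ^ k * Q.h = X T i + 2 * (2 ^ k * Q.h) * u i
      ring
    · constructor
      · exact Int.ediv_nonneg (hdb i).1 (le_of_lt h2k)
      · rw [hu]
        apply Int.ediv_lt_of_lt_mul h2k
        have := (hdb i).2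
        rw [pow_add] at this
        linarith [this]
  · -- descendant P Q
    refine al_descendant k _ Q r ⟨?_, fun i => ?_⟩ fun i => ?_
    · show Q.h = 2 ^ k * Q.h / 2 ^ k
      field_simp
    · show X Q i = X T i + 2 * (2 ^ k * Q.h) * u i + 2 ^ k * Q.h - 2 ^ k * Q.h + 2 * Q.h * r i
      rw [hdX i]
      have : z i = 2 ^ k * u i + r i := (Int.mul_ediv_add_emod (z i) (2 ^ k)).symm
      rw [this]; push_cast; ring
    · exact ⟨Int.emod_nonneg _ (ne_of_gt h2k), Int.emod_lt_of_pos _ h2k⟩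

end Frac
namespace Frac

variable {n : ℕ} {D : Set (Cube n)}

def gg (t : ℤ) (d : Bool) : ℤ := (2 * t + (if d then 1 else 0)) % 3

lemma gg_bounds (t : ℤ) (d : Bool) : 0 ≤ gg t d ∧ gg t d < 3 := by
  unfold gg; rcases d <;> simp <;> omega

lemma gg_invol {t : ℤ} (h0 : 0 ≤ t) (h3 : t < 3) (d : Bool) : gg (gg t d) d = t := by
  unfold gg; rcases d <;> simp <;> omega

/-- The θ-recursion: position residues of the shifted lattices at each scale. -/
def thz (δ : ℕ → Fin n → Bool) (j : Fin n → Fin 3) : ℕ → Fin n → ℤ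
  | 0 => fun i => ((j i : ℕ) : ℤ)
  | (K + 1) => fun i => gg (thz δ j K i) (δ K i)

lemma thz_bounds (δ : ℕ → Fin n → Bool) (j : Fin n → Fin 3) (K : ℕ) (i : Fin n) :
    0 ≤ thz δ j K i ∧ thz δ j K i < 3 := by
  induction K with
  | zero =>
    show 0 ≤ (((j i : ℕ)) : ℤ) ∧ (((j i : ℕ)) : ℤ) < 3
    have := (j i).isLt
    omega
  | succ K _ => exact gg_bounds _ _

lemma thz_surj (δ : ℕ → Fin n → Bool) (K : ℕ) (t : Fin n → ℤ)
    (hb : ∀ i, 0 ≤ t i ∧ t i < 3) : ∃ j, ∀ i, thz δ j K i = t i := by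
  induction K generalizing t with
  | zero =>
    refine ⟨fun i => ⟨(t i).toNat, by have := hb i; omega⟩, fun i => ?_⟩
    show (((t i).toNat : ℕ) : ℤ) = t i
    have := hb i; omega
  | succ K ih =>
    obtain ⟨j, hj⟩ := ih (fun i => gg (t i) (δ K i)) (fun i => gg_bounds _ _)
    refine ⟨j, fun i => ?_⟩
    show gg (thz δ j K i) (δ K i) = t i
    rw [hj i, gg_invol (hb i).1 (hb i).2]

/-- A cofinal tower of cubes in a dyadic lattice. -/
structure Tower (D : Set (Cube n)) where
  P : ℕ → Cube n
  mem : ∀ K, P K ∈ D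
  δ : ℕ → Fin n → Bool
  step : ∀ K, P K = (P (K + 1)).child (δ K)
  cofinal : ∀ Q ∈ D, ∃ K, descendant (P K) Q

lemma tower_hh {Tw : Tower D} (K : ℕ) : (Tw.P K).h = (Tw.P (K + 1)).h / 2 := by
  rw [Tw.step K, h_child]

lemma anc_unique (hD : IsDyadicLattice D) {Q0 A B : Cube n} (hA : A ∈ D) (hB : B ∈ D)
    (dA : descendant A Q0) (dB : descendant B Q0) (hh : A.h = B.h) : A = B := by
  obtain ⟨W, hW, h1, h2⟩ := hD.common_ancestor A hA B hB
  exact eq_of_same_size h1 h2 hh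
    ⟨Q0.c, desc_subset dA (center_mem Q0), desc_subset dB (center_mem Q0)⟩

lemma exists_tower (hD : IsDyadicLattice D) (hn : 0 < n) : Nonempty (Tower D) := by
  obtain ⟨Q0, hQ0, -⟩ := hD.exists_contains ∅ isCompact_empty
  have hanc : ∀ K : ℕ, ∃ P ∈ D, P.h = 2 ^ K * Q0.h ∧ descendant P Q0 :=
    fun K => exists_ancestor hD hn hQ0 K
  choose P hPD hPh hPd using hanc
  have hstep : ∀ K, ∃ ε, P K = (P (K + 1)).child ε := by
    intro K
    have hne : P (K + 1) ≠ Q0 := by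
      intro hcon
      have h1 : (P (K + 1)).h = 2 ^ (K + 1) * Q0.h := hPh (K + 1)
      rw [hcon] at h1
      have := Q0.h_pos
      have h2 : (2:ℝ) ^ (K + 1) ≥ 2 := by
        calc (2:ℝ) ^ (K+1) ≥ 2 ^ 1 := pow_le_pow_right₀ (by norm_num) (by omega)
        _ = 2 := by norm_num
      nlinarith
    obtain hcase := Relation.ReflTransGen.cases_head (hPd (K + 1))
    rcases hcase with heq | ⟨T', hc, hd⟩
    · exact absurd heq hne
    · obtain ⟨ε, hε⟩ := hc
      have hT'D : T' ∈ D := hD.mem_of_descendant _ (hPD (K + 1)) _ (Relation.ReflTransGen.single ⟨ε, hε⟩)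
      have hT'h : T'.h = (P K).h := by
        rw [hε, h_child, hPh (K + 1), hPh K]; ring
      have : T' = P K := anc_unique hD hT'D (hPD K) hd (hPd K) hT'h
      exact ⟨ε, by rw [← this, hε]⟩
  choose δ hδ using hstep
  refine ⟨⟨P, hPD, δ, hδ, fun Q hQ => ?_⟩⟩
  obtain ⟨T, hT, hTQ, hTQ0⟩ := hD.common_ancestor Q hQ Q0 hQ0
  obtain ⟨K, z, ⟨hh, _⟩, _⟩ := descendant_al hTQ0
  have hTh : T.h = 2 ^ K * Q0.h := by
    rw [hh]; field_simp
  have : T = P K := anc_unique hD hT (hPD K) hTQ0 (hPd K) (by rw [hTh, hPh K])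
  exact ⟨K, this ▸ hTQ⟩

end Frac
namespace Frac

variable {n : ℕ} {D : Set (Cube n)}

/-- The shifted 3-dilate cube at position `t` relative to `P`. -/
def Rcube (P : Cube n) (t : Fin n → ℤ) : Cube n :=
  ⟨fun i => (X P i - 2 * P.h * t i) + 3 * P.h, 3 * P.h, by linarith [P.h_pos]⟩

lemma Rcube_h (P : Cube n) (t : Fin n → ℤ) : (Rcube P t).h = 3 * P.h := rfl

lemma X_Rcube (P : Cube n) (t : Fin n → ℤ) (i : Fin n) :
    X (Rcube P t) i = X P i - 2 * P.h * t i := by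
  simp [X, Rcube]

/-- The `j`-th shifted tower over a tower `Tw`. -/
def RT (Tw : Tower D) (j : Fin n → Fin 3) (K : ℕ) : Cube n :=
  Rcube (Tw.P K) (thz Tw.δ j K)

lemma RT_h (Tw : Tower D) (j : Fin n → Fin 3) (K : ℕ) : (RT Tw j K).h = 3 * (Tw.P K).h := rfl

lemma X_RT (Tw : Tower D) (j : Fin n → Fin 3) (K : ℕ) (i : Fin n) :
    X (RT Tw j K) i = X (Tw.P K) i - 2 * (Tw.P K).h * thz Tw.δ j K i := X_Rcube _ _ _

lemma rt_child (Tw : Tower D) (j : Fin n → Fin 3) (K : ℕ) :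
    childRel (RT Tw j (K + 1)) (RT Tw j K) := by
  have hhK : (Tw.P K).h = (Tw.P (K + 1)).h / 2 := tower_hh K
  have hK1pos := (Tw.P (K + 1)).h_pos
  refine ⟨fun i => decide (2 * thz Tw.δ j (K + 1) i + (if Tw.δ K i then 1 else 0)
      - thz Tw.δ j K i = 3), cube_eq ?_ fun i => ?_⟩
  · rw [RT_h, h_child, RT_h, hhK]; ring
  · rw [X_RT, X_child, X_RT, RT_h]
    have hXP : X (Tw.P K) i = X (Tw.P (K + 1)) i + (if Tw.δ K i then (Tw.P (K + 1)).h else 0) := by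
      rw [Tw.step K, X_child]
    rw [hXP, hhK]
    have hb := thz_bounds Tw.δ j K i
    have hb' := thz_bounds Tw.δ j (K + 1) i
    have hgg : thz Tw.δ j (K + 1) i = (2 * thz Tw.δ j K i + (if Tw.δ K i then 1 else 0)) % 3 := rfl
    by_cases hc : 2 * thz Tw.δ j (K + 1) i + (if Tw.δ K i then 1 else 0) - thz Tw.δ j K i = 3 <;>
      rcases hδ : Tw.δ K i with _ | _ <;> simp [hδ] at hc hgg ⊢
    · rw [if_pos hc]
      have hcR : 2 * (thz Tw.δ j (K + 1) i : ℝ) - thz Tw.δ j K i = 3 := by exact_mod_cast hc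
      linear_combination ((Tw.P (K + 1)).h) * hcR
    · rw [if_pos hc]
      have hcR : 2 * (thz Tw.δ j (K + 1) i : ℝ) + 1 - thz Tw.δ j K i = 3 := by exact_mod_cast hc
      linear_combination ((Tw.P (K + 1)).h) * hcR
    · rw [if_neg hc]
      have hc0 : 2 * thz Tw.δ j (K + 1) i - thz Tw.δ j K i = 0 := by omega
      have hcR : 2 * (thz Tw.δ j (K + 1) i : ℝ) - thz Tw.δ j K i = 0 := by exact_mod_cast hc0
      linear_combination ((Tw.P (K + 1)).h) * hcR
    · rw [if_neg hc]
      have hc0 : 2 * thz Tw.δ j (K + 1) i + 1 - thz Tw.δ j K i = 0 := by omega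
      have hcR : 2 * (thz Tw.δ j (K + 1) i : ℝ) + 1 - thz Tw.δ j K i = 0 := by exact_mod_cast hc0
      linear_combination ((Tw.P (K + 1)).h) * hcR

lemma desc_RT (Tw : Tower D) (j : Fin n → Fin 3) {K M : ℕ} (hKM : K ≤ M) :
    descendant (RT Tw j M) (RT Tw j K) := by
  induction M with
  | zero =>
    have : K = 0 := by omega
    rw [this]
    exact Relation.ReflTransGen.refl
  | succ M ih =>
    rcases Nat.eq_or_lt_of_le hKM with heq | hlt
    · rw [heq]
      exact Relation.ReflTransGen.refl
    · exact (Relation.ReflTransGen.single (rt_child Tw j M)).trans (ih (by omega))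

lemma P_subset_RT (Tw : Tower D) (j : Fin n → Fin 3) (K : ℕ) :
    (Tw.P K).set ⊆ (RT Tw j K).set := by
  intro y hy
  rw [mem_set_iff] at hy ⊢
  intro i
  obtain ⟨h1, h2⟩ := hy i
  have hb := thz_bounds Tw.δ j K i
  have hp := (Tw.P K).h_pos
  have hb1 : (0:ℝ) ≤ (thz Tw.δ j K i : ℝ) := by exact_mod_cast hb.1
  have hb2 : (thz Tw.δ j K i : ℝ) ≤ 2 := by
    have : thz Tw.δ j K i ≤ 2 := by omega
    exact_mod_cast this
  rw [RT_h, X_RT]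
  constructor
  · nlinarith
  · nlinarith

/-- The `j`-th of the `3ⁿ` lattices. -/
def Lat (Tw : Tower D) (j : Fin n → Fin 3) : Set (Cube n) :=
  {R | ∃ K, descendant (RT Tw j K) R}

lemma lat_isLattice (hD : IsDyadicLattice D) (Tw : Tower D) (j : Fin n → Fin 3) :
    IsDyadicLattice (Lat Tw j) := by
  constructor
  · rintro Q ⟨K, hK⟩ R hQR
    exact ⟨K, hK.trans hQR⟩
  · rintro Q ⟨K1, h1⟩ Q' ⟨K2, h2⟩
    refine ⟨RT Tw j (max K1 K2), ⟨max K1 K2, Relation.ReflTransGen.refl⟩,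
      (desc_RT Tw j (le_max_left K1 K2)).trans h1,
      (desc_RT Tw j (le_max_right K1 K2)).trans h2⟩
  · intro K hK
    obtain ⟨S, hS, hKS⟩ := hD.exists_contains K hK
    obtain ⟨M, hM⟩ := Tw.cofinal S hS
    exact ⟨RT Tw j M, ⟨M, Relation.ReflTransGen.refl⟩,
      fun y hy => P_subset_RT Tw j M (desc_subset hM (hKS hy))⟩

end Frac
namespace Frac

variable {n : ℕ} {D : Set (Cube n)}

lemma pow2mod3 (k : ℕ) : (2:ℤ) ^ k % 3 = 1 ∨ (2:ℤ) ^ k % 3 = 2 := by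
  induction k with
  | zero => left; rfl
  | succ k ih =>
    have hp : (2:ℤ) ^ (k + 1) = 2 * 2 ^ k := by ring
    omega

lemma three_h (Q : Cube n) : (Q.three).h = 3 * Q.h := rfl

lemma X_three (Q : Cube n) (i : Fin n) : X Q.three i = X Q i - 2 * Q.h := by
  simp [X, Cube.three]; ring

lemma three_in_lat (Tw : Tower D) {Q : Cube n} (hQ : Q ∈ D) : ∃ j, Q.three ∈ Lat Tw j := by
  obtain ⟨K, hdesc⟩ := Tw.cofinal Q hQ
  obtain ⟨k, a, ⟨hh, hX⟩, hb⟩ := descendant_al hdesc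
  have hq := Q.h_pos
  set m : ℤ := 2 ^ k with hm
  have hm0 : (0:ℤ) < m := by positivity
  have hmod := pow2mod3 k
  set t : Fin n → ℤ := fun i => (m * (1 - a i)) % 3 with ht
  have htb : ∀ i, 0 ≤ t i ∧ t i < 3 := fun i =>
    ⟨Int.emod_nonneg _ (by norm_num), Int.emod_lt_of_pos _ (by norm_num)⟩
  obtain ⟨r, hr⟩ : (3:ℤ) ∣ m * m - 1 := by
    rcases hmod with h | h
    · obtain ⟨q, hq'⟩ : ∃ q, m = 3 * q + 1 := ⟨m / 3, by omega⟩
      exact ⟨3 * q * q + 2 * q, by rw [hq']; ring⟩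
    · obtain ⟨q, hq'⟩ : ∃ q, m = 3 * q + 2 := ⟨m / 3, by omega⟩
      exact ⟨3 * q * q + 4 * q + 1, by rw [hq']; ring⟩
  have hdvd : ∀ i, (3:ℤ) ∣ a i - 1 + m * t i := by
    intro i
    have ht' : t i = m * (1 - a i) - 3 * ((m * (1 - a i)) / 3) := Int.emod_def _ _
    refine ⟨-(r * (a i - 1)) - m * ((m * (1 - a i)) / 3), ?_⟩
    rw [ht']
    linear_combination (1 - a i) * hr
  set b : Fin n → ℤ := fun i => (a i - 1 + m * t i) / 3 with hbdef
  have hb3 : ∀ i, 3 * b i = a i - 1 + m * t i := fun i => Int.mul_ediv_cancel' (hdvd i)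
  have hbb : ∀ i, 0 ≤ b i ∧ b i < 2 ^ k := by
    intro i
    have h1 := hb3 i
    have h2 := hb i
    have h3 := htb i
    have h4 : m * t i ≤ m * 2 := by nlinarith [(htb i).2, hm0]
    have h5 : 0 ≤ m * t i := mul_nonneg hm0.le (htb i).1
    omega
  obtain ⟨j, hj⟩ := thz_surj Tw.δ K t htb
  have hPh : (Tw.P K).h = 2 ^ k * Q.h := by rw [hh]; field_simp
  refine ⟨j, K, al_descendant k _ _ b ⟨?_, fun i => ?_⟩ hbb⟩
  · rw [three_h, RT_h, hh]; ring
  · rw [X_three, X_RT, hj i, hX i, three_h, hPh]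
    have hcast : (3:ℝ) * (b i : ℝ) = (a i : ℝ) - 1 + 2 ^ k * (t i : ℝ) := by
      have := hb3 i
      rw [hm] at this
      exact_mod_cast this
    linear_combination (-2 * Q.h) * hcast

lemma lat_sub_image (hD : IsDyadicLattice D) (Tw : Tower D) (j : Fin n → Fin 3) {R : Cube n}
    (hR : R ∈ Lat Tw j) : ∃ Q ∈ D, Q.three = R := by
  obtain ⟨K, hdesc⟩ := hR
  obtain ⟨k, b, ⟨hh, hX⟩, hb⟩ := descendant_al hdesc
  have hp := (Tw.P K).h_pos
  have h2k : (0:ℝ) < 2 ^ k := by positivity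
  have hRpos := R.h_pos
  have hRh3 : R.h = 3 * ((Tw.P K).h / 2 ^ k) := by rw [hh, RT_h]; ring
  refine ⟨⟨R.c, R.h / 3, by linarith⟩, ?_, ?_⟩
  · refine mem_of_al_int hD (Tw.mem K) _ k (fun i => 3 * b i + 1 - 2 ^ k * thz Tw.δ j K i) ?_ fun i => ?_
    · show R.h / 3 = (Tw.P K).h / 2 ^ k
      rw [hRh3]; ring
    · show R.c i - R.h / 3 = X (Tw.P K) i + 2 * (R.h / 3) * ((3 * b i + 1 - 2 ^ k * thz Tw.δ j K i : ℤ) : ℝ)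
      have hXRi : R.c i - R.h = X (Tw.P K) i - 2 * (Tw.P K).h * thz Tw.δ j K i + 2 * R.h * b i := by
        have := hX i
        rw [X_RT] at this
        exact this
      have hKR : (Tw.P K).h = 2 ^ k * (R.h / 3) := by
        rw [hRh3]; field_simp
      rw [hKR] at hXRi
      push_cast
      linear_combination hXRi
  · refine cube_eq ?_ fun i => ?_
    · show 3 * (R.h / 3) = R.h; ring
    · show R.c i - 3 * (R.h / 3) = R.c i - R.h
      ring

lemma lat_unique (Tw : Tower D) {Q : Cube n} (hQ : Q ∈ D) (j : Fin n → Fin 3) :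
    ∃! R : Cube n, R ∈ Lat Tw j ∧ R.side = 3 * Q.side ∧ Q.set ⊆ R.set := by
  obtain ⟨K, hdesc⟩ := Tw.cofinal Q hQ
  obtain ⟨k, a, ⟨hh, hX⟩, hb⟩ := descendant_al hdesc
  have hq := Q.h_pos
  set m : ℤ := 2 ^ k with hm
  have hm0 : (0:ℤ) < m := by positivity
  set t : Fin n → ℤ := fun i => thz Tw.δ j K i with ht
  have htb : ∀ i, 0 ≤ t i ∧ t i < 3 := fun i => thz_bounds Tw.δ j K i
  set b : Fin n → ℤ := fun i => (a i + m * t i) / 3 with hbdef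
  have hub : ∀ i, 0 ≤ a i + m * t i - 3 * b i ∧ a i + m * t i - 3 * b i ≤ 2 := by
    intro i
    have hbi : b i = (a i + m * t i) / 3 := rfl
    rw [hbi]
    have h1 := Int.mul_ediv_add_emod (a i + m * t i) 3
    have h2 := Int.emod_nonneg (a i + m * t i) (by norm_num : (3:ℤ) ≠ 0)
    have h3 := Int.emod_lt_of_pos (a i + m * t i) (by norm_num : (0:ℤ) < 3)
    omega
  have hbb : ∀ i, 0 ≤ b i ∧ b i < 2 ^ k := by
    intro i
    have h1 := hub i
    have h2 := hb i
    have h4 : m * t i ≤ m * 2 := by nlinarith [(htb i).2, hm0]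
    have h5 : 0 ≤ m * t i := mul_nonneg hm0.le (htb i).1
    omega
  have hPh : (Tw.P K).h = 2 ^ k * Q.h := by rw [hh]; field_simp
  set R : Cube n := ⟨fun i => (X (Tw.P K) i - 2 * (Tw.P K).h * t i + 2 * (3 * Q.h) * b i) + 3 * Q.h,
    3 * Q.h, by linarith⟩ with hRdef
  have hRh : R.h = 3 * Q.h := rfl
  have hXRi : ∀ i, X R i = X (Tw.P K) i - 2 * (Tw.P K).h * t i + 6 * Q.h * b i := by
    intro i
    show (X (Tw.P K) i - 2 * (Tw.P K).h * t i + 2 * (3 * Q.h) * b i) + 3 * Q.h - R.h = _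
    rw [hRh]; ring
  have hdescR : descendant (RT Tw j K) R := by
    refine al_descendant k _ _ b ⟨?_, fun i => ?_⟩ hbb
    · rw [hRh, RT_h, hPh]; field_simp
    · rw [hXRi i, X_RT, hRh]; simp only [ht]; ring
  have hXdiff : ∀ i, X Q i - X R i = 2 * Q.h * ((a i + m * t i - 3 * b i : ℤ) : ℝ) := by
    intro i
    rw [hX i, hXRi i, hPh, hm]
    push_cast
    ring
  have hsubR : Q.set ⊆ R.set := by
    intro y hy
    rw [mem_set_iff] at hy ⊢
    intro i
    obtain ⟨h1, h2⟩ := hy i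
    have hu := hub i
    have hu1 : (0:ℝ) ≤ ((a i + m * t i - 3 * b i : ℤ) : ℝ) := by exact_mod_cast hu.1
    have hu2 : ((a i + m * t i - 3 * b i : ℤ) : ℝ) ≤ 2 := by exact_mod_cast hu.2
    have hd := hXdiff i
    rw [hRh]
    constructor
    · nlinarith
    · nlinarith
  refine ⟨R, ⟨⟨K, hdescR⟩, ?_, hsubR⟩, ?_⟩
  · show 2 * R.h = 3 * (2 * Q.h)
    rw [hRh]; ring
  · rintro R' ⟨⟨K', d'⟩, hside', hsub'⟩
    have hR'h : R'.h = 3 * Q.h := by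
      have : 2 * R'.h = 3 * (2 * Q.h) := hside'
      linarith
    have dR : descendant (RT Tw j (max K K')) R :=
      (desc_RT Tw j (le_max_left K K')).trans hdescR
    have dR' : descendant (RT Tw j (max K K')) R' :=
      (desc_RT Tw j (le_max_right K K')).trans d'
    exact eq_of_same_size dR' dR (by rw [hR'h, hRh])
      ⟨Q.c, hsub' (center_mem Q), hsubR (center_mem Q)⟩

end Frac

namespace Frac

/-- **Three lattice theorem.** For every dyadic lattice `𝒟` there are `3ⁿ` dyadic lattices
`𝒟¹, …, 𝒟^{3ⁿ}` with `{3Q : Q ∈ 𝒟} = ⋃ⱼ 𝒟ʲ`, and for every `Q ∈ 𝒟` and every `j` there is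
a unique `R ∈ 𝒟ʲ` of sidelength `3ℓ(Q)` containing `Q`. -/
theorem three_lattice (n : ℕ) (D : Set (Cube n)) (hD : IsDyadicLattice D) :
    ∃ Ds : Fin (3 ^ n) → Set (Cube n),
      (∀ j, IsDyadicLattice (Ds j)) ∧
      ((fun Q : Cube n => Q.three) '' D = ⋃ j, Ds j) ∧
      ∀ Q ∈ D, ∀ j, ∃! R : Cube n, R ∈ Ds j ∧ R.side = 3 * Q.side ∧ Q.set ⊆ R.set := by
  rcases Nat.eq_zero_or_pos n with rfl | hn
  · -- the degenerate case `n = 0`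
    obtain ⟨Q0, hQ0, -⟩ := hD.exists_contains ∅ isCompact_empty
    refine ⟨fun _ => (fun Q : Cube 0 => Q.three) '' D, fun _ => ?_, ?_, ?_⟩
    · constructor
      · rintro R ⟨Q', hQ', rfl⟩ R' hdesc
        obtain ⟨k, z, ⟨hh, _⟩, _⟩ := descendant_al hdesc
        have h3 : (0:ℝ) < R'.h := R'.h_pos
        refine ⟨⟨R'.c, R'.h / 3, by linarith⟩, ?_, ?_⟩
        · refine mem_of_al_int hD hQ' _ k (fun _ => 0) ?_ (fun i => i.elim0)
          show R'.h / 3 = Q'.h / 2 ^ k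
          rw [hh, three_h]; ring
        · exact cube_eq (show 3 * (R'.h / 3) = R'.h by ring) (fun i => i.elim0)
      · rintro R ⟨Q1, hQ1, rfl⟩ R' ⟨Q2, hQ2, rfl⟩
        obtain ⟨W, hW, d1, d2⟩ := hD.common_ancestor Q1 hQ1 Q2 hQ2
        have key : ∀ Q : Cube 0, descendant W Q → descendant W.three Q.three := by
          intro Q hd
          obtain ⟨k, z, ⟨hh, _⟩, _⟩ := descendant_al hd
          refine al_descendant k _ _ (fun _ => 0) ⟨?_, fun i => i.elim0⟩
            (fun i => ⟨le_rfl, by positivity⟩)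
          rw [three_h, three_h, hh]; ring
        exact ⟨W.three, ⟨W, hW, rfl⟩, key Q1 d1, key Q2 d2⟩
      · intro K hK
        exact ⟨Q0.three, ⟨Q0, hQ0, rfl⟩, fun y hy i => i.elim0⟩
    · have : Nonempty (Fin (3 ^ 0)) := ⟨⟨0, by norm_num⟩⟩
      rw [Set.iUnion_const]
    · intro Q hQ j
      have hq := Q.h_pos
      refine ⟨Q.three, ⟨⟨Q, hQ, rfl⟩, by show 2 * (3 * Q.h) = 3 * (2 * Q.h); ring,
        fun y hy i => i.elim0⟩, ?_⟩
      rintro R' ⟨⟨Q'', hQ'', rfl⟩, hside, hsub⟩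
      refine cube_eq ?_ (fun i => i.elim0)
      have h2 : 2 * (Q''.three).h = 3 * (2 * Q.h) := hside
      rw [three_h] at h2
      rw [three_h, three_h]
      linarith
  · -- the main case `n ≥ 1`
    obtain ⟨Tw⟩ := exists_tower hD hn
    have hcard : Fintype.card (Fin n → Fin 3) = 3 ^ n := by simp
    set F := Fintype.equivFinOfCardEq hcard with hF
    refine ⟨fun idx => Lat Tw (F.symm idx), fun idx => lat_isLattice hD Tw _, ?_, ?_⟩
    · ext R
      simp only [Set.mem_iUnion, Set.mem_image]
      constructor
      · rintro ⟨Q, hQ, rfl⟩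
        obtain ⟨j, hj⟩ := three_in_lat Tw hQ
        exact ⟨F j, by simpa using hj⟩
      · rintro ⟨idx, hidx⟩
        obtain ⟨Q, hQ, hQ3⟩ := lat_sub_image hD Tw _ hidx
        exact ⟨Q, hQ, hQ3⟩
    · intro Q hQ idx
      exact lat_unique Tw hQ (F.symm idx)

end Frac
end
end

section
/- Let α, β, γ ≥ 0 with α + β + γ ≥ 1. Let ω, σ be weights on ℝⁿ, let 𝒮 ⊂ 𝒟 be a sparse family in a dyadic lattice 𝒟, and let R be a cube. (i) If α > 0, then Σ_{Q∈𝒮, Q⊂R} |Q|^α σ(Q)^β ω(Q)^γ ≤ C |R|^α σ(R)^β ω(R)^γ, where C depends only on n, α, β, γ and the sparseness constant of 𝒮. (ii) If α = 0, then Σ_{Q∈𝒮, Q⊂R} σ(Q)^β ω(Q)^γ ≤ C [σ]_{A_∞}^β [ω]_{A_∞}^γ σ(R)^β ω(R)^γ, with C depending only on n, β, γ and the sparseness constant of 𝒮. -/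
open MeasureTheory Set ENNReal

noncomputable section

namespace Frac


open scoped NNReal

variable {n : ℕ}

/-! ### Auxiliary geometric lemmas -/

lemma Cube.set_eq (Q : Cube n) :
    Q.set = Set.univ.pi fun i => Set.Ico (Q.c i - Q.h) (Q.c i + Q.h) := by
  ext y; simp [Cube.set, Set.mem_pi, Set.mem_Ico]

lemma Cube.measurableSet_set (Q : Cube n) : MeasurableSet Q.set := by
  rw [Cube.set_eq]; exact MeasurableSet.univ_pi fun i => measurableSet_Ico

lemma Cube.vol_eq (Q : Cube n) : Q.vol = ∏ _i : Fin n, ENNReal.ofReal (2 * Q.h) := by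
  rw [Cube.vol, Cube.set_eq, volume_pi_pi]
  congr 1; ext i; rw [Real.volume_Ico]; ring_nf

lemma Cube.vol_pos (Q : Cube n) : 0 < Q.vol := by
  rw [Cube.vol_eq, pos_iff_ne_zero, Finset.prod_ne_zero_iff]
  intro i _
  exact (ENNReal.ofReal_pos.2 (by have := Q.h_pos; linarith)).ne'

lemma Cube.vol_ne_top (Q : Cube n) : Q.vol ≠ ∞ := by
  rw [Cube.vol_eq]
  exact (ENNReal.prod_lt_top fun i _ => ENNReal.ofReal_lt_top).ne

lemma Cube.child_subset (Q : Cube n) (ε : Fin n → Bool) : (Q.child ε).set ⊆ Q.set := by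
  intro y hy i
  have := hy i
  have hh := Q.h_pos
  simp only [Cube.child] at this
  rcases this with ⟨h1, h2⟩
  by_cases hb : ε i <;> simp [hb] at h1 h2 <;> constructor <;> linarith

lemma Cube.child_disjoint (Q : Cube n) {ε ε' : Fin n → Bool} (h : ε ≠ ε') :
    Disjoint (Q.child ε).set (Q.child ε').set := by
  obtain ⟨i, hi⟩ := Function.ne_iff.1 h
  rw [Set.disjoint_left]
  intro y hy hy'
  have h1 := hy i
  have h2 := hy' i
  have hh := Q.h_pos
  simp only [Cube.child] at h1 h2
  rcases h1 with ⟨a1, a2⟩; rcases h2 with ⟨b1, b2⟩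
  by_cases hb : ε i
  · have hb' : ε' i = false := by cases hε' : ε' i <;> simp_all
    simp [hb] at a1 a2; simp [hb'] at b1 b2; linarith
  · have hb2 : ε i = false := by simp_all
    have hb' : ε' i = true := by cases hε' : ε' i <;> simp_all
    simp [hb2] at a1 a2; simp [hb'] at b1 b2; linarith

lemma descendant_subset {Q R : Cube n} (h : descendant Q R) : R.set ⊆ Q.set := by
  induction h with
  | refl => exact subset_rfl
  | tail _ hcr ih =>
      obtain ⟨ε, rfl⟩ := hcr
      exact (Cube.child_subset _ ε).trans ih

lemma descendant_tri {A Q Q' : Cube n} (h : descendant A Q) (h' : descendant A Q') :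
    Q.set ⊆ Q'.set ∨ Q'.set ⊆ Q.set ∨ Disjoint Q.set Q'.set := by
  induction h using Relation.ReflTransGen.head_induction_on generalizing Q' with
  | refl => exact Or.inr (Or.inl (descendant_subset h'))
  | head hac hcb ih =>
      rcases Relation.ReflTransGen.cases_head h' with rfl | ⟨c', hac', hc'⟩
      · exact Or.inl (descendant_subset (Relation.ReflTransGen.head hac hcb))
      · obtain ⟨ε, rfl⟩ := hac
        obtain ⟨ε', rfl⟩ := hac'
        by_cases hee : ε = ε'
        · subst hee; exact ih hc'
        · exact Or.inr (Or.inr (Set.disjoint_of_subset (descendant_subset hcb)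
            (descendant_subset hc') (Cube.child_disjoint _ hee)))

lemma lattice_tri {D : Set (Cube n)} (hD : IsDyadicLattice D) {Q Q' : Cube n}
    (hQ : Q ∈ D) (hQ' : Q' ∈ D) :
    Q.set ⊆ Q'.set ∨ Q'.set ⊆ Q.set ∨ Disjoint Q.set Q'.set := by
  obtain ⟨A, _, h1, h2⟩ := hD.common_ancestor Q hQ Q' hQ'
  exact descendant_tri h1 h2

lemma subset_reverse {Q Q' : Cube n} (hsub : Q.set ⊆ Q'.set) (hh : Q'.h ≤ Q.h) :
    Q'.set ⊆ Q.set := by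
  rcases Nat.eq_zero_or_pos n with hn | hn
  · intro y _
    intro i; exact absurd i.2 (by omega)
  · have hne : ∀ i, (Set.Ico (Q.c i - Q.h) (Q.c i + Q.h)).Nonempty := by
      intro i; rw [Set.nonempty_Ico]; have := Q.h_pos; linarith
    rw [Cube.set_eq, Cube.set_eq] at hsub ⊢
    rcases Set.univ_pi_subset_univ_pi_iff.1 hsub with hcoord | ⟨i, hi⟩
    · refine Set.univ_pi_subset_univ_pi_iff.2 (Or.inl fun i => ?_)
      have hi := hcoord i
      rw [Set.Ico_subset_Ico_iff (by have := Q.h_pos; linarith)] at hi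
      obtain ⟨h1, h2⟩ := hi
      have h3 : Q.h ≤ Q'.h := by linarith
      have : Q.h = Q'.h := le_antisymm h3 hh
      rw [Set.Ico_subset_Ico_iff (by have := Q'.h_pos; linarith)]
      constructor <;> linarith
    · exact absurd hi (Set.nonempty_iff_ne_empty.1 (hne i))

/-! ### Weights and integrals -/

lemma wInt_mono {w : (Fin n → ℝ) → ℝ} {Q R : Cube n} (h : Q.set ⊆ R.set) :
    wInt w Q ≤ wInt w R := lintegral_mono_set h

lemma wInt_ne_top {w : (Fin n → ℝ) → ℝ} (hw : LocallyIntegrable w volume)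
    (Q : Cube n) : wInt w Q ≠ ∞ := by
  have hsub : Q.set ⊆ Set.Icc (fun i => Q.c i - Q.h) (fun i => Q.c i + Q.h) := by
    intro y hy
    rw [Set.mem_Icc]
    constructor <;> intro i <;> have := hy i
    · exact this.1
    · exact (this.2).le
  have hint : IntegrableOn w Q.set volume :=
    (hw.integrableOn_isCompact isCompact_Icc).mono_set hsub
  have h1 : wInt w Q ≤ ∫⁻ y in Q.set, (‖w y‖₊ : ℝ≥0∞) :=
    lintegral_mono fun y => Real.ofReal_le_enorm (w y)
  exact (h1.trans_lt hint.2).ne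

lemma sum_setLIntegral_le {ι : Type*} {X : Type*} [MeasurableSpace X] {μ : Measure X}
    (g : X → ℝ≥0∞) (F : Finset ι) (E : ι → Set X) :
    ∀ (A : Set X), MeasurableSet A → (∀ i ∈ F, MeasurableSet (E i)) →
    (∀ i ∈ F, E i ⊆ A) →
    (∀ i ∈ F, ∀ j ∈ F, i ≠ j → Disjoint (E i) (E j)) →
    ∑ i ∈ F, ∫⁻ x in E i, g x ∂μ ≤ ∫⁻ x in A, g x ∂μ := by
  classical
  induction F using Finset.induction with
  | empty => intro A _ _ _ _; simp
  | insert a F hnotmem ih =>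
      intro A hA hmeas hsub hdisj
      rw [Finset.sum_insert hnotmem]
      have hEa : MeasurableSet (E a) := hmeas a (Finset.mem_insert_self a F)
      have step : ∑ i ∈ F, ∫⁻ x in E i, g x ∂μ ≤ ∫⁻ x in A \ E a, g x ∂μ := by
        refine ih (A \ E a) (hA.diff hEa)
          (fun i hi => hmeas i (Finset.mem_insert_of_mem hi))
          (fun i hi => ?_)
          (fun i hi j hj hij => hdisj i (Finset.mem_insert_of_mem hi) j
            (Finset.mem_insert_of_mem hj) hij)
        have hd : Disjoint (E i) (E a) :=
          hdisj i (Finset.mem_insert_of_mem hi) a (Finset.mem_insert_self a F)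
            (by rintro rfl; exact hnotmem hi)
        exact Set.subset_diff.2 ⟨hsub i (Finset.mem_insert_of_mem hi), hd⟩
      calc (∫⁻ x in E a, g x ∂μ) + ∑ i ∈ F, ∫⁻ x in E i, g x ∂μ
          ≤ (∫⁻ x in E a, g x ∂μ) + ∫⁻ x in A \ E a, g x ∂μ := by gcongr
        _ = ∫⁻ x in E a ∪ (A \ E a), g x ∂μ := by
            rw [Measure.restrict_union disjoint_sdiff_right (hA.diff hEa),
              lintegral_add_measure]
        _ ≤ ∫⁻ x in A, g x ∂μ := lintegral_mono_set
            (Set.union_subset (hsub a (Finset.mem_insert_self a F)) Set.diff_subset)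

lemma sumE_le {E : Cube n → Set (Fin n → ℝ)} {F : Finset (Cube n)} {R : Cube n}
    (hmeas : ∀ Q ∈ F, MeasurableSet (E Q)) (hsub : ∀ Q ∈ F, E Q ⊆ R.set)
    (hdisj : ∀ Q ∈ F, ∀ Q' ∈ F, Q ≠ Q' → Disjoint (E Q) (E Q')) :
    ∑ Q ∈ F, volume (E Q) ≤ R.vol := by
  rw [← measure_biUnion_finset (fun Q hQ Q' hQ' h => hdisj Q hQ Q' hQ' h) hmeas]
  exact measure_mono (Set.iUnion₂_subset hsub)

/-! ### The covering lemma -/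

lemma cover_lemma {D : Set (Cube n)} (hD : IsDyadicLattice D)
    (E : Cube n → Set (Fin n → ℝ)) (σ : (Fin n → ℝ) → ℝ) (t : ℝ≥0∞) :
    ∀ (F : Finset (Cube n)), ∀ (A : Set (Fin n → ℝ)), MeasurableSet A →
    (∀ Q ∈ F, Q ∈ D) →
    (∀ Q ∈ F, MeasurableSet (E Q) ∧ E Q ⊆ Q.set) →
    (∀ Q ∈ F, ∀ Q' ∈ F, Q ≠ Q' → Disjoint (E Q) (E Q')) →
    (∀ Q ∈ F, Q.set ⊆ A) →
    (∀ Q ∈ F, t * Q.vol ≤ wInt σ Q) →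
    t * ∑ Q ∈ F, volume (E Q) ≤ ∫⁻ x in A, ENNReal.ofReal (σ x) := by
  classical
  intro F
  induction F using Finset.strongInduction with
  | _ F ih =>
    intro A hA hFD hFE hFdisj hFsub hFt
    rcases Finset.eq_empty_or_nonempty F with rfl | hne
    · simp
    obtain ⟨Q₀, hQ₀F, hQ₀max⟩ := Finset.exists_max_image F (fun Q => Q.h) hne
    set G := F.filter (fun Q => Q.set ⊆ Q₀.set) with hG
    set F' := F.filter (fun Q => ¬ Q.set ⊆ Q₀.set) with hF'
    have hQ₀G : Q₀ ∈ G := Finset.mem_filter.2 ⟨hQ₀F, subset_rfl⟩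
    have hF'ss : F' ⊂ F := by
      refine Finset.ssubset_iff_of_subset (Finset.filter_subset _ _) |>.2 ?_
      exact ⟨Q₀, hQ₀F, by simp [hF']⟩
    have hdisjQ₀ : ∀ Q ∈ F', Disjoint Q.set Q₀.set := by
      intro Q hQ
      have hQF : Q ∈ F := (Finset.filter_subset _ _) hQ
      have hnsub : ¬ Q.set ⊆ Q₀.set := (Finset.mem_filter.1 hQ).2
      rcases lattice_tri hD (hFD Q hQF) (hFD Q₀ hQ₀F) with h1 | h2 | h3
      · exact absurd h1 hnsub
      · exact absurd (subset_reverse h2 (hQ₀max Q hQF)) hnsub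
      · exact h3
    have hsplit : ∑ Q ∈ F, volume (E Q)
        = ∑ Q ∈ G, volume (E Q) + ∑ Q ∈ F', volume (E Q) := by
      rw [hG, hF', Finset.sum_filter_add_sum_filter_not]
    have hGbound : t * ∑ Q ∈ G, volume (E Q) ≤ ∫⁻ x in Q₀.set, ENNReal.ofReal (σ x) := by
      have h1 : ∑ Q ∈ G, volume (E Q) ≤ Q₀.vol := by
        have := measure_biUnion_finset (μ := volume) (s := G) (f := E)
          (fun Q hQ Q' hQ' hne => hFdisj Q ((Finset.filter_subset _ _) hQ)
            Q' ((Finset.filter_subset _ _) hQ') hne)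
          (fun Q hQ => (hFE Q ((Finset.filter_subset _ _) hQ)).1)
        rw [← this]
        refine measure_mono (Set.iUnion₂_subset fun Q hQ => ?_)
        exact ((hFE Q ((Finset.filter_subset _ _) hQ)).2).trans
          (Finset.mem_filter.1 hQ).2
      calc t * ∑ Q ∈ G, volume (E Q) ≤ t * Q₀.vol := by gcongr
        _ ≤ wInt σ Q₀ := hFt Q₀ hQ₀F
        _ = _ := rfl
    have hF'bound : t * ∑ Q ∈ F', volume (E Q)
        ≤ ∫⁻ x in A \ Q₀.set, ENNReal.ofReal (σ x) := by
      refine ih F' hF'ss (A \ Q₀.set) (hA.diff (Cube.measurableSet_set Q₀))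
        (fun Q hQ => hFD Q ((Finset.filter_subset _ _) hQ))
        (fun Q hQ => hFE Q ((Finset.filter_subset _ _) hQ))
        (fun Q hQ Q' hQ' h => hFdisj Q ((Finset.filter_subset _ _) hQ)
          Q' ((Finset.filter_subset _ _) hQ') h)
        (fun Q hQ => Set.subset_diff.2
          ⟨hFsub Q ((Finset.filter_subset _ _) hQ), hdisjQ₀ Q hQ⟩)
        (fun Q hQ => hFt Q ((Finset.filter_subset _ _) hQ))
    calc t * ∑ Q ∈ F, volume (E Q)
        = t * ∑ Q ∈ G, volume (E Q) + t * ∑ Q ∈ F', volume (E Q) := by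
          rw [hsplit, mul_add]
      _ ≤ (∫⁻ x in Q₀.set, ENNReal.ofReal (σ x))
          + ∫⁻ x in A \ Q₀.set, ENNReal.ofReal (σ x) := add_le_add hGbound hF'bound
      _ = ∫⁻ x in Q₀.set ∪ (A \ Q₀.set), ENNReal.ofReal (σ x) := by
          rw [Measure.restrict_union disjoint_sdiff_right
            (hA.diff (Cube.measurableSet_set Q₀)), lintegral_add_measure]
      _ ≤ ∫⁻ x in A, ENNReal.ofReal (σ x) := by
          have hQ₀A : Q₀.set ⊆ A := hFsub Q₀ hQ₀F
          exact lintegral_mono_set (Set.union_subset hQ₀A Set.diff_subset)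

/-! ### ENNReal elementary lemmas -/

lemma pow_rpow_comm (x : ℝ≥0∞) (j : ℕ) (p : ℝ) : (x ^ j) ^ p = (x ^ p) ^ j := by
  rw [← ENNReal.rpow_natCast x j, ← ENNReal.rpow_mul, mul_comm, ENNReal.rpow_mul,
    ENNReal.rpow_natCast]

lemma two_rpow_sub_one (p : ℝ) : (2:ℝ≥0∞) ^ p * 2⁻¹ = 2 ^ (p - 1) := by
  have : (2:ℝ≥0∞) ^ (p + (-1)) = 2 ^ p * 2 ^ (-1:ℝ) :=
    ENNReal.rpow_add p (-1) (by norm_num) (by norm_num)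
  rw [show p - 1 = p + (-1) by ring, this, ENNReal.rpow_neg, ENNReal.rpow_one]

lemma geom_mean_le {x y : ℝ≥0∞} {θ : ℝ} (h0 : 0 < θ) (h1 : θ < 1)
    (hx : x ≠ ∞) (hy : y ≠ ∞) :
    x ^ θ * y ^ (1 - θ) ≤ ENNReal.ofReal θ * x + ENNReal.ofReal (1 - θ) * y := by
  lift x to ℝ≥0 using hx
  lift y to ℝ≥0 using hy
  have hw : θ.toNNReal + (1 - θ).toNNReal = 1 := by
    ext
    simp [Real.toNNReal_of_nonneg h0.le, Real.toNNReal_of_nonneg (by linarith : (0:ℝ) ≤ 1 - θ)]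
  have key := NNReal.geom_mean_le_arith_mean2_weighted (w₁ := θ.toNNReal)
    (w₂ := (1 - θ).toNNReal) (p₁ := x) (p₂ := y) hw
  have hθ : ((θ.toNNReal : ℝ)) = θ := Real.coe_toNNReal θ h0.le
  have hθ' : (((1 - θ).toNNReal : ℝ)) = 1 - θ := Real.coe_toNNReal _ (by linarith)
  rw [hθ, hθ'] at key
  calc (x : ℝ≥0∞) ^ θ * (y : ℝ≥0∞) ^ (1 - θ)
      = ((x ^ θ * y ^ (1 - θ) : ℝ≥0) : ℝ≥0∞) := by
        rw [ENNReal.coe_mul, ← ENNReal.coe_rpow_of_nonneg x h0.le,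
          ← ENNReal.coe_rpow_of_nonneg y (by linarith)]
    _ ≤ ((θ.toNNReal * x + (1 - θ).toNNReal * y : ℝ≥0) : ℝ≥0∞) := ENNReal.coe_le_coe.2 key
    _ = ENNReal.ofReal θ * x + ENNReal.ofReal (1 - θ) * y := by
        rw [ENNReal.coe_add, ENNReal.coe_mul, ENNReal.coe_mul]; rfl

lemma holder_sum {ι : Type*} (F : Finset ι) (u v : ι → ℝ≥0∞) {θ : ℝ}
    (h0 : 0 ≤ θ) (h1 : θ ≤ 1) :
    ∑ i ∈ F, (u i) ^ θ * (v i) ^ (1 - θ)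
      ≤ (∑ i ∈ F, u i) ^ θ * (∑ i ∈ F, v i) ^ (1 - θ) := by
  rcases eq_or_lt_of_le h0 with rfl | h0'
  · simp
  rcases eq_or_lt_of_le h1 with rfl | h1'
  · simp
  set U := ∑ i ∈ F, u i with hU
  set V := ∑ i ∈ F, v i with hV
  rcases eq_or_ne U 0 with hU0 | hU0
  · have : ∀ i ∈ F, u i = 0 := by
      intro i hi
      exact le_antisymm (hU0 ▸ Finset.single_le_sum (fun j _ => zero_le) hi) zero_le
    calc ∑ i ∈ F, (u i) ^ θ * (v i) ^ (1 - θ)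
        = ∑ i ∈ F, 0 := Finset.sum_congr rfl (fun i hi => by
          rw [this i hi, ENNReal.zero_rpow_of_pos h0', zero_mul])
      _ ≤ _ := by simp
  rcases eq_or_ne V 0 with hV0 | hV0
  · have : ∀ i ∈ F, v i = 0 := by
      intro i hi
      exact le_antisymm (hV0 ▸ Finset.single_le_sum (fun j _ => zero_le) hi) zero_le
    calc ∑ i ∈ F, (u i) ^ θ * (v i) ^ (1 - θ)
        = ∑ i ∈ F, 0 := Finset.sum_congr rfl (fun i hi => by
          rw [this i hi, ENNReal.zero_rpow_of_pos (by linarith), mul_zero])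
      _ ≤ _ := by simp
  rcases eq_or_ne U ∞ with hUtop | hUtop
  · rw [hUtop, ENNReal.top_rpow_of_pos h0', ENNReal.top_mul]
    · exact le_top
    · exact fun h => hV0 (by
        rcases ENNReal.rpow_eq_zero_iff.1 h with ⟨h', _⟩ | ⟨_, h'⟩
        · exact h'
        · linarith)
  rcases eq_or_ne V ∞ with hVtop | hVtop
  · rw [hVtop, ENNReal.top_rpow_of_pos (by linarith), ENNReal.mul_top]
    · exact le_top
    · exact fun h => hU0 (by
        rcases ENNReal.rpow_eq_zero_iff.1 h with ⟨h', _⟩ | ⟨_, h'⟩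
        · exact h'
        · linarith)
  have step : ∀ i ∈ F, (u i) ^ θ * (v i) ^ (1 - θ)
      ≤ U ^ θ * V ^ (1 - θ) *
        (ENNReal.ofReal θ * (u i * U⁻¹) + ENNReal.ofReal (1 - θ) * (v i * V⁻¹)) := by
    intro i hi
    have hu : u i = U * (u i * U⁻¹) := by
      rw [mul_comm (u i), ← mul_assoc, ENNReal.mul_inv_cancel hU0 hUtop, one_mul]
    have hv : v i = V * (v i * V⁻¹) := by
      rw [mul_comm (v i), ← mul_assoc, ENNReal.mul_inv_cancel hV0 hVtop, one_mul]
    calc (u i) ^ θ * (v i) ^ (1 - θ)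
        = (U * (u i * U⁻¹)) ^ θ * (V * (v i * V⁻¹)) ^ (1 - θ) := by rw [← hu, ← hv]
      _ = U ^ θ * V ^ (1 - θ) * ((u i * U⁻¹) ^ θ * (v i * V⁻¹) ^ (1 - θ)) := by
          rw [ENNReal.mul_rpow_of_nonneg _ _ h0,
            ENNReal.mul_rpow_of_nonneg _ _ (by linarith : (0:ℝ) ≤ 1 - θ)]
          ring
      _ ≤ U ^ θ * V ^ (1 - θ) *
          (ENNReal.ofReal θ * (u i * U⁻¹) + ENNReal.ofReal (1 - θ) * (v i * V⁻¹)) := by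
          gcongr
          refine geom_mean_le h0' h1' ?_ ?_
          · exact ENNReal.mul_ne_top (ne_top_of_le_ne_top hUtop
              (Finset.single_le_sum (fun j _ => zero_le) hi)) (ENNReal.inv_ne_top.2 hU0)
          · exact ENNReal.mul_ne_top (ne_top_of_le_ne_top hVtop
              (Finset.single_le_sum (fun j _ => zero_le) hi)) (ENNReal.inv_ne_top.2 hV0)
  calc ∑ i ∈ F, (u i) ^ θ * (v i) ^ (1 - θ)
      ≤ ∑ i ∈ F, U ^ θ * V ^ (1 - θ) *
          (ENNReal.ofReal θ * (u i * U⁻¹) + ENNReal.ofReal (1 - θ) * (v i * V⁻¹)) :=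
        Finset.sum_le_sum step
    _ = U ^ θ * V ^ (1 - θ) *
          (ENNReal.ofReal θ * (U * U⁻¹) + ENNReal.ofReal (1 - θ) * (V * V⁻¹)) := by
        rw [← Finset.mul_sum, Finset.sum_add_distrib, ← Finset.mul_sum, ← Finset.mul_sum,
          ← Finset.sum_mul, ← Finset.sum_mul]
    _ = U ^ θ * V ^ (1 - θ) := by
        rw [ENNReal.mul_inv_cancel hU0 hUtop, ENNReal.mul_inv_cancel hV0 hVtop,
          mul_one, mul_one, ← ENNReal.ofReal_add h0 (by linarith), add_sub_cancel,
          ENNReal.ofReal_one, mul_one]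

lemma rpow_le_mul_rpow {x X : ℝ≥0∞} (hxX : x ≤ X) {e e' : ℝ} (h0 : 0 ≤ e') (h : e' ≤ e) :
    x ^ e ≤ X ^ (e - e') * x ^ e' := by
  calc x ^ e = x ^ (e - e') * x ^ e' := by
        rw [← ENNReal.rpow_add_of_nonneg _ _ (by linarith) h0, sub_add_cancel]
    _ ≤ X ^ (e - e') * x ^ e' :=
        mul_le_mul_left (ENNReal.rpow_le_rpow hxX (by linarith)) _

lemma rpow_recombine (x : ℝ≥0∞) {e e' : ℝ} (h0 : 0 ≤ e') (h : e' ≤ e) :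
    x ^ (e - e') * x ^ e' = x ^ e := by
  rw [← ENNReal.rpow_add_of_nonneg _ _ (by linarith) h0, sub_add_cancel]

lemma rpow_split_one (x : ℝ≥0∞) {θ : ℝ} (h0 : 0 ≤ θ) (h1 : θ ≤ 1) :
    x ^ θ * x ^ (1 - θ) = x := by
  rw [← ENNReal.rpow_add_of_nonneg θ (1 - θ) h0 (by linarith),
    show θ + (1 - θ) = 1 by ring, ENNReal.rpow_one]

lemma EAB_ident (e A B : ℝ≥0∞) {p θ : ℝ} (hp : 0 ≤ p) (hθ0 : 0 ≤ θ) (hθ1 : θ ≤ 1) :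
    e * A ^ (p * θ) * B ^ (p * (1 - θ)) = (e * A ^ p) ^ θ * (e * B ^ p) ^ (1 - θ) := by
  rw [ENNReal.mul_rpow_of_nonneg _ _ hθ0,
    ENNReal.mul_rpow_of_nonneg _ _ (by linarith : (0:ℝ) ≤ 1 - θ),
    ← ENNReal.rpow_mul A, ← ENNReal.rpow_mul B]
  calc e * A ^ (p * θ) * B ^ (p * (1 - θ))
      = (e ^ θ * e ^ (1 - θ)) * A ^ (p * θ) * B ^ (p * (1 - θ)) := by
        rw [rpow_split_one e hθ0 hθ1]
    _ = e ^ θ * A ^ (p * θ) * (e ^ (1 - θ) * B ^ (p * (1 - θ))) := by ring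

/-! ### The Kolmogorov-type estimate -/

/-- the geometric constant in the Kolmogorov-type bound -/
def CK (p : ℝ) : ℝ≥0∞ := 1 + 2 ^ p * (1 - 2 ^ (p - 1) : ℝ≥0∞)⁻¹

lemma CK_lt_top {p : ℝ} (hp : 0 < p) (hp1 : p < 1) : CK p < ∞ := by
  have h2 : (2:ℝ≥0∞) ^ (p - 1) < 1 := by
    have : (2:ℝ≥0∞) ^ (p - 1) < 2 ^ (0:ℝ) :=
      ENNReal.rpow_lt_rpow_of_exponent_lt (by norm_num) (by norm_num) (by linarith)
    simpa using this
  have hinv : (1 - (2:ℝ≥0∞) ^ (p - 1))⁻¹ ≠ ∞ := by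
    rw [ENNReal.inv_ne_top]
    exact (tsub_pos_of_lt h2).ne'
  rw [CK, lt_top_iff_ne_top]
  refine ENNReal.add_ne_top.2 ⟨ENNReal.one_ne_top, ENNReal.mul_ne_top ?_ hinv⟩
  exact ENNReal.rpow_ne_top_of_nonneg hp.le (by norm_num)

lemma kolmogorov {D S : Set (Cube n)} (hD : IsDyadicLattice D) (hSD : S ⊆ D)
    (E : Cube n → Set (Fin n → ℝ))
    (hE1 : ∀ Q ∈ S, MeasurableSet (E Q) ∧ E Q ⊆ Q.set)
    (hE2 : ∀ Q ∈ S, ∀ Q' ∈ S, Q ≠ Q' → Disjoint (E Q) (E Q'))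
    (σ : (Fin n → ℝ) → ℝ) (R : Cube n) (hσtop : wInt σ R ≠ ∞)
    {p : ℝ} (hp : 0 < p) (hp1 : p < 1)
    (F : Finset (Cube n)) (hF : ∀ Q ∈ F, Q ∈ S ∧ Q.set ⊆ R.set) :
    ∑ Q ∈ F, volume (E Q) * (wInt σ Q * (Q.vol)⁻¹) ^ p
      ≤ CK p * (R.vol ^ (1 - p) * wInt σ R ^ p) := by
  classical
  set a : Cube n → ℝ≥0∞ := fun Q => wInt σ Q * (Q.vol)⁻¹ with ha
  rcases eq_or_ne (wInt σ R) 0 with hσ0 | hσ0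
  · have hz : ∀ Q ∈ F, volume (E Q) * a Q ^ p = 0 := by
      intro Q hQ
      have h1 : wInt σ Q = 0 :=
        le_antisymm (hσ0 ▸ wInt_mono (hF Q hQ).2) zero_le
      rw [ha]; simp only [h1, zero_mul, ENNReal.zero_rpow_of_pos hp, mul_zero]
    rw [Finset.sum_congr rfl hz]
    simp
  have hvol0 : R.vol ≠ 0 := (Cube.vol_pos R).ne'
  have hvoltop : R.vol ≠ ∞ := Cube.vol_ne_top R
  set lam : ℝ≥0∞ := wInt σ R * (R.vol)⁻¹ with hlam
  have hlam0 : lam ≠ 0 := by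
    rw [hlam]; exact mul_ne_zero hσ0 (ENNReal.inv_ne_zero.2 hvoltop)
  have hlamtop : lam ≠ ∞ :=
    ENNReal.mul_ne_top hσtop (ENNReal.inv_ne_top.2 hvol0)
  have hafin : ∀ Q ∈ F, a Q ≠ ∞ := by
    intro Q hQ
    exact ENNReal.mul_ne_top (ne_top_of_le_ne_top hσtop (wInt_mono (hF Q hQ).2))
      (ENNReal.inv_ne_top.2 (Cube.vol_pos Q).ne')
  have hex : ∀ Q ∈ F, ∃ j : ℕ, a Q ≤ lam * 2 ^ (j + 1) := by
    intro Q hQ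
    obtain ⟨m, hm⟩ := ENNReal.exists_nat_gt
      (ENNReal.mul_ne_top (hafin Q hQ) (ENNReal.inv_ne_top.2 hlam0))
    refine ⟨m, ?_⟩
    have h2 : ((m : ℝ≥0∞)) ≤ 2 ^ (m + 1) := by
      calc (m : ℝ≥0∞) ≤ ((2 ^ (m+1) : ℕ) : ℝ≥0∞) := by
            exact_mod_cast (Nat.lt_two_pow_self (n := m)).le.trans
              (Nat.pow_le_pow_right (by norm_num) (by omega))
        _ = 2 ^ (m + 1) := by push_cast; ring
    have key : a Q * lam⁻¹ ≤ 2 ^ (m + 1) := (hm.le.trans h2)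
    calc a Q = a Q * lam⁻¹ * lam := by
          rw [mul_assoc, ENNReal.inv_mul_cancel hlam0 hlamtop, mul_one]
      _ ≤ 2 ^ (m + 1) * lam := by gcongr
      _ = lam * 2 ^ (m + 1) := mul_comm _ _
  set jm : Cube n → ℕ := fun Q =>
    if hq : ∃ j : ℕ, a Q ≤ lam * 2 ^ (j + 1) then Nat.find hq else 0 with hjm
  rw [← Finset.sum_filter_add_sum_filter_not F (fun Q => a Q ≤ lam)]
  set Flow := F.filter (fun Q => a Q ≤ lam) with hFlow
  set Fhigh := F.filter (fun Q => ¬ a Q ≤ lam) with hFhigh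
  have hEprops : ∀ Q ∈ F, MeasurableSet (E Q) ∧ E Q ⊆ R.set := by
    intro Q hQ
    exact ⟨(hE1 Q (hF Q hQ).1).1, (hE1 Q (hF Q hQ).1).2.trans (hF Q hQ).2⟩
  have hdisjF : ∀ Q ∈ F, ∀ Q' ∈ F, Q ≠ Q' → Disjoint (E Q) (E Q') :=
    fun Q hQ Q' hQ' h => hE2 Q (hF Q hQ).1 Q' (hF Q' hQ').1 h
  have hlow : ∑ Q ∈ Flow, volume (E Q) * a Q ^ p ≤ R.vol * lam ^ p := by
    calc ∑ Q ∈ Flow, volume (E Q) * a Q ^ p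
        ≤ ∑ Q ∈ Flow, volume (E Q) * lam ^ p := by
          refine Finset.sum_le_sum fun Q hQ => ?_
          have : a Q ≤ lam := (Finset.mem_filter.1 hQ).2
          exact mul_le_mul_right (ENNReal.rpow_le_rpow this hp.le) _
      _ = (∑ Q ∈ Flow, volume (E Q)) * lam ^ p := (Finset.sum_mul _ _ _).symm
      _ ≤ R.vol * lam ^ p := by
          gcongr
          refine sumE_le (fun Q hQ => (hEprops Q (Finset.filter_subset _ _ hQ)).1)
            (fun Q hQ => (hEprops Q (Finset.filter_subset _ _ hQ)).2)
            (fun Q hQ Q' hQ' h => hdisjF Q (Finset.filter_subset _ _ hQ)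
              Q' (Finset.filter_subset _ _ hQ') h)
  have hfiber : ∀ j : ℕ, ∑ Q ∈ Fhigh.filter (fun Q => jm Q = j), volume (E Q)
      ≤ R.vol * ((2:ℝ≥0∞) ^ j)⁻¹ := by
    intro j
    set Fj := Fhigh.filter (fun Q => jm Q = j) with hFj
    have hsubF : ∀ Q ∈ Fj, Q ∈ F := fun Q hQ =>
      Finset.filter_subset _ _ (Finset.filter_subset _ _ hQ)
    have hlow2 : ∀ Q ∈ Fj, lam * 2 ^ j < a Q := by
      intro Q hQ
      have hnle : ¬ a Q ≤ lam := (Finset.mem_filter.1 (Finset.filter_subset _ _ hQ)).2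
      have hjmQ : jm Q = j := (Finset.mem_filter.1 hQ).2
      have hqex : ∃ k : ℕ, a Q ≤ lam * 2 ^ (k + 1) := hex Q (hsubF Q hQ)
      have hfind : jm Q = Nat.find hqex := by rw [hjm]; exact dif_pos hqex
      rcases Nat.eq_zero_or_pos j with rfl | hjpos
      · simpa using not_le.1 hnle
      · obtain ⟨k, rfl⟩ := Nat.exists_eq_add_of_lt hjpos
        have hk : k < Nat.find hqex := by omega
        have := Nat.find_min hqex hk
        simpa [Nat.zero_add] using not_le.1 this
    have hup : (lam * 2 ^ j) * ∑ Q ∈ Fj, volume (E Q) ≤ wInt σ R := by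
      refine cover_lemma hD E σ (lam * 2 ^ j) Fj R.set (Cube.measurableSet_set R)
        (fun Q hQ => hSD (hF Q (hsubF Q hQ)).1)
        (fun Q hQ => hE1 Q (hF Q (hsubF Q hQ)).1)
        (fun Q hQ Q' hQ' h => hdisjF Q (hsubF Q hQ) Q' (hsubF Q' hQ') h)
        (fun Q hQ => (hF Q (hsubF Q hQ)).2)
        (fun Q hQ => ?_)
      have h1 : lam * 2 ^ j ≤ a Q := (hlow2 Q hQ).le
      calc (lam * 2 ^ j) * Q.vol ≤ a Q * Q.vol := by gcongr
        _ = wInt σ Q := by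
            rw [ha, mul_assoc, ENNReal.inv_mul_cancel (Cube.vol_pos Q).ne'
              (Cube.vol_ne_top Q), mul_one]
    have ht0 : lam * (2:ℝ≥0∞) ^ j ≠ 0 := mul_ne_zero hlam0 (by positivity)
    have httop : lam * (2:ℝ≥0∞) ^ j ≠ ∞ :=
      ENNReal.mul_ne_top hlamtop (by exact ENNReal.pow_ne_top (by norm_num))
    calc ∑ Q ∈ Fj, volume (E Q)
        = (lam * 2 ^ j)⁻¹ * ((lam * 2 ^ j) * ∑ Q ∈ Fj, volume (E Q)) := by
          rw [← mul_assoc, ENNReal.inv_mul_cancel ht0 httop, one_mul]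
      _ ≤ (lam * 2 ^ j)⁻¹ * wInt σ R := by gcongr
      _ = R.vol * ((2:ℝ≥0∞) ^ j)⁻¹ := by
          rw [ENNReal.mul_inv (Or.inl hlam0) (Or.inl hlamtop), hlam,
            ENNReal.mul_inv (Or.inl hσ0) (Or.inl hσtop), inv_inv]
          calc (wInt σ R)⁻¹ * R.vol * ((2:ℝ≥0∞) ^ j)⁻¹ * wInt σ R
              = (wInt σ R)⁻¹ * wInt σ R * (R.vol * ((2:ℝ≥0∞) ^ j)⁻¹) := by ring
            _ = R.vol * ((2:ℝ≥0∞) ^ j)⁻¹ := by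
                rw [ENNReal.inv_mul_cancel hσ0 hσtop, one_mul]
  have hval : ∀ Q ∈ Fhigh, volume (E Q) * a Q ^ p
      ≤ volume (E Q) * (lam * 2 ^ (jm Q + 1)) ^ p := by
    intro Q hQ
    have hqex : ∃ k : ℕ, a Q ≤ lam * 2 ^ (k + 1) := hex Q (Finset.filter_subset _ _ hQ)
    have hfind : jm Q = Nat.find hqex := by rw [hjm]; exact dif_pos hqex
    have hspec := Nat.find_spec hqex
    rw [hfind]
    exact mul_le_mul_right (ENNReal.rpow_le_rpow hspec hp.le) _
  have harith : ∀ j : ℕ, (lam * 2 ^ (j + 1)) ^ p * (R.vol * ((2:ℝ≥0∞) ^ j)⁻¹)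
      = lam ^ p * R.vol * (2 ^ p * ((2:ℝ≥0∞) ^ (p - 1)) ^ j) := by
    intro j
    rw [ENNReal.mul_rpow_of_nonneg _ _ hp.le, pow_rpow_comm, ← two_rpow_sub_one,
      ENNReal.inv_pow, mul_pow, pow_succ]
    ring
  have hhigh : ∑ Q ∈ Fhigh, volume (E Q) * a Q ^ p
      ≤ lam ^ p * R.vol * 2 ^ p * (1 - (2:ℝ≥0∞) ^ (p - 1))⁻¹ := by
    calc ∑ Q ∈ Fhigh, volume (E Q) * a Q ^ p
        ≤ ∑ Q ∈ Fhigh, volume (E Q) * (lam * 2 ^ (jm Q + 1)) ^ p :=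
          Finset.sum_le_sum hval
      _ = ∑ j ∈ Fhigh.image jm, ∑ Q ∈ Fhigh.filter (fun Q => jm Q = j),
            volume (E Q) * (lam * 2 ^ (jm Q + 1)) ^ p := by
          rw [Finset.sum_fiberwise_of_maps_to (fun Q hQ => Finset.mem_image_of_mem jm hQ)]
      _ = ∑ j ∈ Fhigh.image jm, (lam * 2 ^ (j + 1)) ^ p *
            ∑ Q ∈ Fhigh.filter (fun Q => jm Q = j), volume (E Q) := by
          refine Finset.sum_congr rfl fun j hj => ?_
          rw [Finset.mul_sum]
          refine Finset.sum_congr rfl fun Q hQ => ?_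
          rw [(Finset.mem_filter.1 hQ).2, mul_comm]
      _ ≤ ∑ j ∈ Fhigh.image jm, (lam * 2 ^ (j + 1)) ^ p * (R.vol * ((2:ℝ≥0∞) ^ j)⁻¹) := by
          refine Finset.sum_le_sum fun j hj => ?_
          gcongr
          exact hfiber j
      _ = ∑ j ∈ Fhigh.image jm, lam ^ p * R.vol * (2 ^ p * ((2:ℝ≥0∞) ^ (p - 1)) ^ j) := by
          exact Finset.sum_congr rfl fun j _ => harith j
      _ = lam ^ p * R.vol * 2 ^ p * ∑ j ∈ Fhigh.image jm, ((2:ℝ≥0∞) ^ (p - 1)) ^ j := by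
          rw [Finset.mul_sum]
          exact Finset.sum_congr rfl fun j _ => by ring
      _ ≤ lam ^ p * R.vol * 2 ^ p * (1 - (2:ℝ≥0∞) ^ (p - 1))⁻¹ := by
          gcongr
          calc ∑ j ∈ Fhigh.image jm, ((2:ℝ≥0∞) ^ (p - 1)) ^ j
              ≤ ∑' j : ℕ, ((2:ℝ≥0∞) ^ (p - 1)) ^ j := ENNReal.sum_le_tsum _
            _ = (1 - (2:ℝ≥0∞) ^ (p - 1))⁻¹ := ENNReal.tsum_geometric _
  have hfinal : R.vol * lam ^ p = R.vol ^ (1 - p) * wInt σ R ^ p := by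
    rw [hlam, ENNReal.mul_rpow_of_nonneg _ _ hp.le, ENNReal.inv_rpow, ← ENNReal.rpow_neg,
      show (1:ℝ) - p = 1 + (-p) by ring, ENNReal.rpow_add 1 (-p) hvol0 hvoltop,
      ENNReal.rpow_one]
    ring
  calc ∑ Q ∈ Flow, volume (E Q) * a Q ^ p + ∑ Q ∈ Fhigh, volume (E Q) * a Q ^ p
      ≤ R.vol * lam ^ p + lam ^ p * R.vol * 2 ^ p * (1 - (2:ℝ≥0∞) ^ (p - 1))⁻¹ :=
        add_le_add hlow hhigh
    _ = CK p * (R.vol * lam ^ p) := by rw [CK]; ring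
    _ = CK p * (R.vol ^ (1 - p) * wInt σ R ^ p) := by rw [hfinal]

/-! ### `A∞` lemmas -/

lemma le_emax {σ : (Fin n → ℝ) → ℝ} {Q R : Cube n} (hQR : Q.set ⊆ R.set)
    {x : Fin n → ℝ} (hx : x ∈ Q.set) :
    wInt σ Q * (Q.vol)⁻¹ ≤ emax (R.set.indicator fun y => ENNReal.ofReal (σ y)) x := by
  have h1 : ∫⁻ y in Q.set, (R.set.indicator fun y => ENNReal.ofReal (σ y)) y = wInt σ Q := by
    rw [lintegral_indicator (Cube.measurableSet_set R),
      Measure.restrict_restrict (Cube.measurableSet_set R),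
      Set.inter_eq_self_of_subset_right hQR]
    rfl
  calc wInt σ Q * (Q.vol)⁻¹
      = (Q.vol)⁻¹ * ∫⁻ y in Q.set, (R.set.indicator fun y => ENNReal.ofReal (σ y)) y := by
        rw [h1, mul_comm]
    _ ≤ _ := le_iSup₂ (f := fun (Q' : Cube n) (_ : x ∈ Q'.set) =>
        (Q'.vol)⁻¹ * ∫⁻ y in Q'.set, (R.set.indicator fun y => ENNReal.ofReal (σ y)) y) Q hx

lemma lintegral_emax_le {σ : (Fin n → ℝ) → ℝ} (R : Cube n)
    (h0 : wInt σ R ≠ 0) (ht : wInt σ R ≠ ∞) :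
    ∫⁻ x in R.set, emax (R.set.indicator fun y => ENNReal.ofReal (σ y)) x
      ≤ Ainf σ * wInt σ R := by
  set I := ∫⁻ x in R.set, emax (R.set.indicator fun y => ENNReal.ofReal (σ y)) x with hI
  have h1 : (wInt σ R)⁻¹ * I ≤ Ainf σ := le_iSup (f := fun Q : Cube n =>
    (wInt σ Q)⁻¹ * ∫⁻ x in Q.set, emax (Q.set.indicator fun y => ENNReal.ofReal (σ y)) x) R
  calc I = wInt σ R * ((wInt σ R)⁻¹ * I) := by
        rw [← mul_assoc, ENNReal.mul_inv_cancel h0 ht, one_mul]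
    _ ≤ wInt σ R * Ainf σ := by gcongr
    _ = Ainf σ * wInt σ R := mul_comm _ _

lemma one_le_Ainf {σ : (Fin n → ℝ) → ℝ} (R : Cube n)
    (h0 : wInt σ R ≠ 0) (ht : wInt σ R ≠ ∞) : 1 ≤ Ainf σ := by
  have hpt : ∀ x ∈ R.set, wInt σ R * (R.vol)⁻¹
      ≤ emax (R.set.indicator fun y => ENNReal.ofReal (σ y)) x :=
    fun x hx => le_emax subset_rfl hx
  have h2 : wInt σ R ≤ ∫⁻ x in R.set,
      emax (R.set.indicator fun y => ENNReal.ofReal (σ y)) x := by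
    calc wInt σ R = (wInt σ R * (R.vol)⁻¹) * R.vol := by
          rw [mul_assoc, ENNReal.inv_mul_cancel (Cube.vol_pos R).ne' (Cube.vol_ne_top R),
            mul_one]
      _ = ∫⁻ _x in R.set, (wInt σ R * (R.vol)⁻¹) := by rw [setLIntegral_const]; rfl
      _ ≤ _ := setLIntegral_mono' (Cube.measurableSet_set R) hpt
  calc (1:ℝ≥0∞) = (wInt σ R)⁻¹ * wInt σ R := (ENNReal.inv_mul_cancel h0 ht).symm
    _ ≤ (wInt σ R)⁻¹ * ∫⁻ x in R.set,
        emax (R.set.indicator fun y => ENNReal.ofReal (σ y)) x := by gcongr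
    _ ≤ Ainf σ := le_iSup (f := fun Q : Cube n =>
        (wInt σ Q)⁻¹ * ∫⁻ x in Q.set, emax (Q.set.indicator fun y => ENNReal.ofReal (σ y)) x) R

lemma sum_Ea_le {S : Set (Cube n)} (E : Cube n → Set (Fin n → ℝ))
    (hE1 : ∀ Q ∈ S, MeasurableSet (E Q) ∧ E Q ⊆ Q.set)
    (hE2 : ∀ Q ∈ S, ∀ Q' ∈ S, Q ≠ Q' → Disjoint (E Q) (E Q'))
    {σ : (Fin n → ℝ) → ℝ} (R : Cube n) (h0 : wInt σ R ≠ 0) (ht : wInt σ R ≠ ∞)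
    (F : Finset (Cube n)) (hF : ∀ Q ∈ F, Q ∈ S ∧ Q.set ⊆ R.set) :
    ∑ Q ∈ F, volume (E Q) * (wInt σ Q * (Q.vol)⁻¹) ≤ Ainf σ * wInt σ R := by
  set g := emax (R.set.indicator fun y => ENNReal.ofReal (σ y)) with hg
  have step1 : ∀ Q ∈ F, volume (E Q) * (wInt σ Q * (Q.vol)⁻¹) ≤ ∫⁻ x in E Q, g x := by
    intro Q hQ
    calc volume (E Q) * (wInt σ Q * (Q.vol)⁻¹)
        = ∫⁻ _x in E Q, (wInt σ Q * (Q.vol)⁻¹) := by rw [setLIntegral_const]; ring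
      _ ≤ ∫⁻ x in E Q, g x := setLIntegral_mono' (hE1 Q (hF Q hQ).1).1
          (fun x hx => le_emax (hF Q hQ).2 ((hE1 Q (hF Q hQ).1).2 hx))
  calc ∑ Q ∈ F, volume (E Q) * (wInt σ Q * (Q.vol)⁻¹)
      ≤ ∑ Q ∈ F, ∫⁻ x in E Q, g x := Finset.sum_le_sum step1
    _ ≤ ∫⁻ x in R.set, g x := sum_setLIntegral_le g F E R.set (Cube.measurableSet_set R)
        (fun Q hQ => (hE1 Q (hF Q hQ).1).1)
        (fun Q hQ => ((hE1 Q (hF Q hQ).1).2).trans (hF Q hQ).2)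
        (fun Q hQ Q' hQ' h => hE2 Q (hF Q hQ).1 Q' (hF Q' hQ').1 h)
    _ ≤ Ainf σ * wInt σ R := lintegral_emax_le R h0 ht

/-- **Carleson-type sums over sparse families** (Fackler–Hytönen, Lemma 4.2). -/
theorem sparse_carleson_sum (n : ℕ) (a β γ η : ℝ)
    (ha : 0 ≤ a) (hβ : 0 ≤ β) (hγ : 0 ≤ γ) (hsum : 1 ≤ a + β + γ)
    (hη : 0 < η) (hη1 : η < 1) :
    ∃ C : ℝ≥0∞, 0 < C ∧ C < ∞ ∧
      ∀ (D S : Set (Cube n)), IsDyadicLattice D → S ⊆ D → IsSparse η S →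
      ∀ ω σ : (Fin n → ℝ) → ℝ,
        (∀ x, 0 ≤ ω x) → LocallyIntegrable ω volume →
        (∀ x, 0 ≤ σ x) → LocallyIntegrable σ volume →
      ∀ R : Cube n,
        (0 < a →
          (∑' Q : {Q : Cube n // Q ∈ S ∧ Q.set ⊆ R.set},
              Q.1.vol ^ a * wInt σ Q.1 ^ β * wInt ω Q.1 ^ γ) ≤
            C * (R.vol ^ a * wInt σ R ^ β * wInt ω R ^ γ)) ∧
        (a = 0 →
          (∑' Q : {Q : Cube n // Q ∈ S ∧ Q.set ⊆ R.set},
              wInt σ Q.1 ^ β * wInt ω Q.1 ^ γ) ≤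
            C * Ainf σ ^ β * Ainf ω ^ γ * (wInt σ R ^ β * wInt ω R ^ γ)) := by
  classical
  have hs0 : (0:ℝ) < a + β + γ := by linarith
  set s : ℝ := a + β + γ with hs
  set a' : ℝ := a / s with ha'def
  set β' : ℝ := β / s with hβ'def
  set γ' : ℝ := γ / s with hγ'def
  set p : ℝ := β' + γ' with hpdef
  set eta : ℝ≥0∞ := ENNReal.ofReal η with heta
  have heta0 : eta ≠ 0 := (ENNReal.ofReal_pos.2 hη).ne'
  have hetat : eta ≠ ∞ := ENNReal.ofReal_ne_top
  set Dc : ℝ≥0∞ := if hcond : 0 < p ∧ p < 1 then CK p else 0 with hDc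
  have hDct : Dc ≠ ∞ := by
    rw [hDc]
    split
    · rename_i hcond; exact (CK_lt_top hcond.1 hcond.2).ne
    · exact ENNReal.zero_ne_top
  -- basic exponent facts
  have ha'0 : 0 ≤ a' := div_nonneg ha hs0.le
  have hβ'0 : 0 ≤ β' := div_nonneg hβ hs0.le
  have hγ'0 : 0 ≤ γ' := div_nonneg hγ hs0.le
  have ha'le : a' ≤ a := div_le_self ha hsum
  have hβ'le : β' ≤ β := div_le_self hβ hsum
  have hγ'le : γ' ≤ γ := div_le_self hγ hsum
  have hsplit1 : a' + β' + γ' = 1 := by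
    rw [ha'def, hβ'def, hγ'def, ← add_div, ← add_div, div_self hs0.ne']
  have ha'p : a' + p = 1 := by rw [hpdef]; linarith
  refine ⟨eta⁻¹ * (1 + Dc), ?_, ?_, ?_⟩
  · rw [pos_iff_ne_zero]
    refine mul_ne_zero (ENNReal.inv_ne_zero.2 hetat) (fun h => ?_)
    have h1 : (1:ℝ≥0∞) ≤ 1 + Dc := le_self_add
    rw [h] at h1
    exact (not_le.2 zero_lt_one) h1
  · rw [lt_top_iff_ne_top]
    exact ENNReal.mul_ne_top (ENNReal.inv_ne_top.2 heta0)
      (ENNReal.add_ne_top.2 ⟨ENNReal.one_ne_top, hDct⟩)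
  intro 𝒟 S h𝒟 hS𝒟 hSp ω σ hω hωloc hσ hσloc R
  obtain ⟨E, hE1, hE2⟩ := hSp
  have hE1' : ∀ Q ∈ S, MeasurableSet (E Q) ∧ E Q ⊆ Q.set :=
    fun Q hQ => ⟨(hE1 Q hQ).1, (hE1 Q hQ).2.1⟩
  have hσt : wInt σ R ≠ ∞ := wInt_ne_top hσloc R
  have hωt : wInt ω R ≠ ∞ := wInt_ne_top hωloc R
  have hv0 : R.vol ≠ 0 := (Cube.vol_pos R).ne'
  have hvt : R.vol ≠ ∞ := Cube.vol_ne_top R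
  -- the sparse volume bound
  have hsparse : ∀ Q ∈ S, Q.vol ≤ eta⁻¹ * volume (E Q) := by
    intro Q hQ
    calc Q.vol = eta⁻¹ * (eta * Q.vol) := by
          rw [← mul_assoc, ENNReal.inv_mul_cancel heta0 hetat, one_mul]
      _ ≤ eta⁻¹ * volume (E Q) := mul_le_mul_right (hE1 Q hQ).2.2 _
  -- volume splitting identity
  have hvolsplit : ∀ Q : Cube n, Q.vol ^ a' * wInt σ Q ^ β' * wInt ω Q ^ γ'
      = Q.vol * (wInt σ Q * (Q.vol)⁻¹) ^ β' * (wInt ω Q * (Q.vol)⁻¹) ^ γ' := by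
    intro Q
    have hQ0 : Q.vol ≠ 0 := (Cube.vol_pos Q).ne'
    have hQt : Q.vol ≠ ∞ := Cube.vol_ne_top Q
    have hσQ : wInt σ Q = Q.vol * (wInt σ Q * (Q.vol)⁻¹) := by
      rw [mul_comm, mul_assoc, ENNReal.inv_mul_cancel hQ0 hQt, mul_one]
    have hωQ : wInt ω Q = Q.vol * (wInt ω Q * (Q.vol)⁻¹) := by
      rw [mul_comm, mul_assoc, ENNReal.inv_mul_cancel hQ0 hQt, mul_one]
    calc Q.vol ^ a' * wInt σ Q ^ β' * wInt ω Q ^ γ'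
        = Q.vol ^ a' * (Q.vol * (wInt σ Q * (Q.vol)⁻¹)) ^ β' *
            (Q.vol * (wInt ω Q * (Q.vol)⁻¹)) ^ γ' := by rw [← hσQ, ← hωQ]
      _ = (Q.vol ^ a' * Q.vol ^ β' * Q.vol ^ γ') *
            ((wInt σ Q * (Q.vol)⁻¹) ^ β' * (wInt ω Q * (Q.vol)⁻¹) ^ γ') := by
          rw [ENNReal.mul_rpow_of_nonneg _ _ hβ'0, ENNReal.mul_rpow_of_nonneg _ _ hγ'0]
          ring
      _ = Q.vol * (wInt σ Q * (Q.vol)⁻¹) ^ β' * (wInt ω Q * (Q.vol)⁻¹) ^ γ' := by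
          rw [← ENNReal.rpow_add_of_nonneg a' β' ha'0 hβ'0,
            ← ENNReal.rpow_add_of_nonneg _ γ' (by linarith) hγ'0, hsplit1,
            ENNReal.rpow_one]
          ring
  constructor
  -- part (i) : a > 0
  · intro hapos
    rw [ENNReal.tsum_eq_iSup_sum]
    refine iSup_le fun Fs => ?_
    have hinj : ∀ x ∈ Fs, ∀ y ∈ Fs, (x:{Q : Cube n // Q ∈ S ∧ Q.set ⊆ R.set}).val = y.val → x = y :=
      fun x _ y _ h => Subtype.ext h
    set F : Finset (Cube n) := Fs.image Subtype.val with hFdef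
    have hF : ∀ Q ∈ F, Q ∈ S ∧ Q.set ⊆ R.set := by
      intro Q hQ
      obtain ⟨x, _, rfl⟩ := Finset.mem_image.1 hQ
      exact x.2
    have hsum_eq : ∑ x ∈ Fs, (x:{Q : Cube n // Q ∈ S ∧ Q.set ⊆ R.set}).val.vol ^ a *
          wInt σ x.val ^ β * wInt ω x.val ^ γ
        = ∑ Q ∈ F, Q.vol ^ a * wInt σ Q ^ β * wInt ω Q ^ γ :=
      (Finset.sum_image (f := fun Q : Cube n => Q.vol ^ a * wInt σ Q ^ β * wInt ω Q ^ γ)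
        hinj).symm
    rw [hsum_eq]
    by_cases hc1 : 0 < β ∧ wInt σ R = 0
    · have hz : ∀ Q ∈ F, Q.vol ^ a * wInt σ Q ^ β * wInt ω Q ^ γ = 0 := by
        intro Q hQ
        have h1 : wInt σ Q = 0 :=
          le_antisymm (hc1.2 ▸ wInt_mono (hF Q hQ).2) zero_le
        rw [h1, ENNReal.zero_rpow_of_pos hc1.1, mul_zero, zero_mul]
      rw [Finset.sum_congr rfl hz]
      simp
    by_cases hc2 : 0 < γ ∧ wInt ω R = 0
    · have hz : ∀ Q ∈ F, Q.vol ^ a * wInt σ Q ^ β * wInt ω Q ^ γ = 0 := by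
        intro Q hQ
        have h1 : wInt ω Q = 0 :=
          le_antisymm (hc2.2 ▸ wInt_mono (hF Q hQ).2) zero_le
        rw [h1, ENNReal.zero_rpow_of_pos hc2.1, mul_zero]
      rw [Finset.sum_congr rfl hz]
      simp
    -- core estimate
    have hcore : ∑ Q ∈ F, volume (E Q) * (wInt σ Q * (Q.vol)⁻¹) ^ β' *
          (wInt ω Q * (Q.vol)⁻¹) ^ γ'
        ≤ (1 + Dc) * (R.vol ^ a' * wInt σ R ^ β' * wInt ω R ^ γ') := by
      rcases eq_or_lt_of_le (by positivity : (0:ℝ) ≤ p) with hp0 | hppos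
      · -- p = 0
        have hβ'z : β' = 0 := by rw [hpdef] at hp0; linarith
        have hγ'z : γ' = 0 := by rw [hpdef] at hp0; linarith
        have ha'1 : a' = 1 := by linarith
        have hz : ∀ Q ∈ F, volume (E Q) * (wInt σ Q * (Q.vol)⁻¹) ^ β' *
            (wInt ω Q * (Q.vol)⁻¹) ^ γ' = volume (E Q) := by
          intro Q _
          rw [hβ'z, hγ'z, ENNReal.rpow_zero, ENNReal.rpow_zero, mul_one, mul_one]
        rw [Finset.sum_congr rfl hz]
        calc ∑ Q ∈ F, volume (E Q) ≤ R.vol :=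
              sumE_le (fun Q hQ => (hE1 Q (hF Q hQ).1).1)
                (fun Q hQ => (hE1 Q (hF Q hQ).1).2.1.trans (hF Q hQ).2)
                (fun Q hQ Q' hQ' h => hE2 Q (hF Q hQ).1 Q' (hF Q' hQ').1 h)
          _ = R.vol ^ a' * wInt σ R ^ β' * wInt ω R ^ γ' := by
              rw [ha'1, hβ'z, hγ'z, ENNReal.rpow_one, ENNReal.rpow_zero,
                ENNReal.rpow_zero, mul_one, mul_one]
          _ ≤ (1 + Dc) * (R.vol ^ a' * wInt σ R ^ β' * wInt ω R ^ γ') := by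
              exact le_mul_of_one_le_left zero_le le_self_add
      · -- 0 < p
        have hp1 : p < 1 := by
          have : 0 < a' := div_pos hapos hs0
          linarith
        have hDcCK : Dc = CK p := dif_pos ⟨hppos, hp1⟩
        set θ : ℝ := β' / p with hθdef
        have hθ0 : 0 ≤ θ := div_nonneg hβ'0 hppos.le
        have hθ1 : θ ≤ 1 := by
          rw [hθdef, div_le_one hppos]
          rw [hpdef]; linarith
        have he1 : p * θ = β' := by
          rw [hθdef]; field_simp
        have he2 : p * (1 - θ) = γ' := by
          rw [hθdef]; field_simp; rw [hpdef]; ring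
        have hident : ∀ Q ∈ F, volume (E Q) * (wInt σ Q * (Q.vol)⁻¹) ^ β' *
            (wInt ω Q * (Q.vol)⁻¹) ^ γ'
            = (volume (E Q) * (wInt σ Q * (Q.vol)⁻¹) ^ p) ^ θ *
              (volume (E Q) * (wInt ω Q * (Q.vol)⁻¹) ^ p) ^ (1 - θ) := by
          intro Q _
          rw [← he1, ← he2]
          exact EAB_ident _ _ _ hppos.le hθ0 hθ1
        rw [Finset.sum_congr rfl hident]
        have hkolσ := kolmogorov h𝒟 hS𝒟 E hE1' hE2 σ R hσt hppos hp1 F hF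
        have hkolω := kolmogorov h𝒟 hS𝒟 E hE1' hE2 ω R hωt hppos hp1 F hF
        calc ∑ Q ∈ F, (volume (E Q) * (wInt σ Q * (Q.vol)⁻¹) ^ p) ^ θ *
              (volume (E Q) * (wInt ω Q * (Q.vol)⁻¹) ^ p) ^ (1 - θ)
            ≤ (∑ Q ∈ F, volume (E Q) * (wInt σ Q * (Q.vol)⁻¹) ^ p) ^ θ *
              (∑ Q ∈ F, volume (E Q) * (wInt ω Q * (Q.vol)⁻¹) ^ p) ^ (1 - θ) :=
              holder_sum F _ _ hθ0 hθ1
          _ ≤ (CK p * (R.vol ^ (1 - p) * wInt σ R ^ p)) ^ θ *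
              (CK p * (R.vol ^ (1 - p) * wInt ω R ^ p)) ^ (1 - θ) := by
              exact mul_le_mul' (ENNReal.rpow_le_rpow hkolσ hθ0)
                (ENNReal.rpow_le_rpow hkolω (by linarith))
          _ = ((CK p * R.vol ^ (1 - p)) ^ θ * (CK p * R.vol ^ (1 - p)) ^ (1 - θ)) *
              ((wInt σ R ^ p) ^ θ * (wInt ω R ^ p) ^ (1 - θ)) := by
              rw [← mul_assoc (CK p), ← mul_assoc (CK p),
                ENNReal.mul_rpow_of_nonneg _ _ hθ0,
                ENNReal.mul_rpow_of_nonneg _ _ (by linarith : (0:ℝ) ≤ 1 - θ)]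
              ring
          _ = (CK p * R.vol ^ (1 - p)) * (wInt σ R ^ β' * wInt ω R ^ γ') := by
              rw [rpow_split_one _ hθ0 hθ1, ← ENNReal.rpow_mul (wInt σ R),
                ← ENNReal.rpow_mul (wInt ω R), he1, he2]
          _ = CK p * (R.vol ^ a' * wInt σ R ^ β' * wInt ω R ^ γ') := by
              rw [show (1:ℝ) - p = a' by linarith]
              ring
          _ ≤ (1 + Dc) * (R.vol ^ a' * wInt σ R ^ β' * wInt ω R ^ γ') := by
              rw [hDcCK]
              exact mul_le_mul_left le_add_self _
    -- assemble
    have hred : ∀ Q ∈ F, Q.vol ^ a * wInt σ Q ^ β * wInt ω Q ^ γ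
        ≤ (R.vol ^ (a - a') * wInt σ R ^ (β - β') * wInt ω R ^ (γ - γ')) *
          (Q.vol ^ a' * wInt σ Q ^ β' * wInt ω Q ^ γ') := by
      intro Q hQ
      have h1 := rpow_le_mul_rpow (measure_mono (hF Q hQ).2 :
        Q.vol ≤ R.vol) ha'0 ha'le
      have h2 := rpow_le_mul_rpow (wInt_mono (hF Q hQ).2 (w := σ)) hβ'0 hβ'le
      have h3 := rpow_le_mul_rpow (wInt_mono (hF Q hQ).2 (w := ω)) hγ'0 hγ'le
      calc Q.vol ^ a * wInt σ Q ^ β * wInt ω Q ^ γ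
          ≤ (R.vol ^ (a - a') * Q.vol ^ a') * (wInt σ R ^ (β - β') * wInt σ Q ^ β') *
            (wInt ω R ^ (γ - γ') * wInt ω Q ^ γ') := mul_le_mul' (mul_le_mul' h1 h2) h3
        _ = _ := by ring
    calc ∑ Q ∈ F, Q.vol ^ a * wInt σ Q ^ β * wInt ω Q ^ γ
        ≤ ∑ Q ∈ F, (R.vol ^ (a - a') * wInt σ R ^ (β - β') * wInt ω R ^ (γ - γ')) *
            (Q.vol ^ a' * wInt σ Q ^ β' * wInt ω Q ^ γ') := Finset.sum_le_sum hred
      _ = (R.vol ^ (a - a') * wInt σ R ^ (β - β') * wInt ω R ^ (γ - γ')) *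
            ∑ Q ∈ F, Q.vol ^ a' * wInt σ Q ^ β' * wInt ω Q ^ γ' :=
          (Finset.mul_sum _ _ _).symm
      _ = (R.vol ^ (a - a') * wInt σ R ^ (β - β') * wInt ω R ^ (γ - γ')) *
            ∑ Q ∈ F, Q.vol * (wInt σ Q * (Q.vol)⁻¹) ^ β' * (wInt ω Q * (Q.vol)⁻¹) ^ γ' := by
          rw [Finset.sum_congr rfl (fun Q _ => hvolsplit Q)]
      _ ≤ (R.vol ^ (a - a') * wInt σ R ^ (β - β') * wInt ω R ^ (γ - γ')) *
            ∑ Q ∈ F, eta⁻¹ * (volume (E Q) * (wInt σ Q * (Q.vol)⁻¹) ^ β' *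
              (wInt ω Q * (Q.vol)⁻¹) ^ γ') := by
          refine mul_le_mul_right (Finset.sum_le_sum fun Q hQ => ?_) _
          calc Q.vol * (wInt σ Q * (Q.vol)⁻¹) ^ β' * (wInt ω Q * (Q.vol)⁻¹) ^ γ'
              ≤ (eta⁻¹ * volume (E Q)) * (wInt σ Q * (Q.vol)⁻¹) ^ β' *
                  (wInt ω Q * (Q.vol)⁻¹) ^ γ' := by
                exact mul_le_mul_left (mul_le_mul_left (hsparse Q (hF Q hQ).1) _) _
            _ = eta⁻¹ * (volume (E Q) * (wInt σ Q * (Q.vol)⁻¹) ^ β' *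
                  (wInt ω Q * (Q.vol)⁻¹) ^ γ') := by ring
      _ = (R.vol ^ (a - a') * wInt σ R ^ (β - β') * wInt ω R ^ (γ - γ')) * (eta⁻¹ *
            ∑ Q ∈ F, volume (E Q) * (wInt σ Q * (Q.vol)⁻¹) ^ β' *
              (wInt ω Q * (Q.vol)⁻¹) ^ γ') := by
          rw [← Finset.mul_sum]
      _ ≤ (R.vol ^ (a - a') * wInt σ R ^ (β - β') * wInt ω R ^ (γ - γ')) * (eta⁻¹ *
            ((1 + Dc) * (R.vol ^ a' * wInt σ R ^ β' * wInt ω R ^ γ'))) := by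
          exact mul_le_mul_right (mul_le_mul_right hcore _) _
      _ = (eta⁻¹ * (1 + Dc)) * ((R.vol ^ (a - a') * R.vol ^ a') *
            (wInt σ R ^ (β - β') * wInt σ R ^ β') *
            (wInt ω R ^ (γ - γ') * wInt ω R ^ γ')) := by ring
      _ = eta⁻¹ * (1 + Dc) * (R.vol ^ a * wInt σ R ^ β * wInt ω R ^ γ) := by
          rw [rpow_recombine _ ha'0 ha'le, rpow_recombine _ hβ'0 hβ'le,
            rpow_recombine _ hγ'0 hγ'le]
  -- part (ii) : a = 0
  · intro ha0
    have hβγ : 1 ≤ β + γ := by linarith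
    have hp1' : β' + γ' = 1 := by
      have : a' = 0 := by rw [ha'def, ha0, zero_div]
      linarith
    rw [ENNReal.tsum_eq_iSup_sum]
    refine iSup_le fun Fs => ?_
    have hinj : ∀ x ∈ Fs, ∀ y ∈ Fs, (x:{Q : Cube n // Q ∈ S ∧ Q.set ⊆ R.set}).val = y.val → x = y :=
      fun x _ y _ h => Subtype.ext h
    set F : Finset (Cube n) := Fs.image Subtype.val with hFdef
    have hF : ∀ Q ∈ F, Q ∈ S ∧ Q.set ⊆ R.set := by
      intro Q hQ
      obtain ⟨x, _, rfl⟩ := Finset.mem_image.1 hQ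
      exact x.2
    have hsum_eq : ∑ x ∈ Fs, wInt σ (x:{Q : Cube n // Q ∈ S ∧ Q.set ⊆ R.set}).val ^ β *
          wInt ω x.val ^ γ
        = ∑ Q ∈ F, wInt σ Q ^ β * wInt ω Q ^ γ :=
      (Finset.sum_image (f := fun Q : Cube n => wInt σ Q ^ β * wInt ω Q ^ γ) hinj).symm
    rw [hsum_eq]
    by_cases hc1 : 0 < β ∧ wInt σ R = 0
    · have hz : ∀ Q ∈ F, wInt σ Q ^ β * wInt ω Q ^ γ = 0 := by
        intro Q hQ
        have h1 : wInt σ Q = 0 :=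
          le_antisymm (hc1.2 ▸ wInt_mono (hF Q hQ).2) zero_le
        rw [h1, ENNReal.zero_rpow_of_pos hc1.1, zero_mul]
      rw [Finset.sum_congr rfl hz]
      simp
    by_cases hc2 : 0 < γ ∧ wInt ω R = 0
    · have hz : ∀ Q ∈ F, wInt σ Q ^ β * wInt ω Q ^ γ = 0 := by
        intro Q hQ
        have h1 : wInt ω Q = 0 :=
          le_antisymm (hc2.2 ▸ wInt_mono (hF Q hQ).2) zero_le
        rw [h1, ENNReal.zero_rpow_of_pos hc2.1, mul_zero]
      rw [Finset.sum_congr rfl hz]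
      simp
    -- Hölder identity with p = 1, θ = β'
    have hident : ∀ Q ∈ F, volume (E Q) * (wInt σ Q * (Q.vol)⁻¹) ^ β' *
        (wInt ω Q * (Q.vol)⁻¹) ^ γ'
        = (volume (E Q) * (wInt σ Q * (Q.vol)⁻¹)) ^ β' *
          (volume (E Q) * (wInt ω Q * (Q.vol)⁻¹)) ^ (1 - β') := by
      intro Q _
      have := EAB_ident (volume (E Q)) (wInt σ Q * (Q.vol)⁻¹) (wInt ω Q * (Q.vol)⁻¹)
        (p := 1) (θ := β') zero_le_one hβ'0 (by linarith)
      rw [one_mul, one_mul, ENNReal.rpow_one, ENNReal.rpow_one] at this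
      rw [show γ' = 1 - β' by linarith, ← this]
    -- the two claims
    have claim1 : (∑ Q ∈ F, volume (E Q) * (wInt σ Q * (Q.vol)⁻¹)) ^ β'
        ≤ Ainf σ ^ β * wInt σ R ^ β' := by
      rcases eq_or_lt_of_le hβ with hβ0 | hβpos
      · have : β' = 0 := by rw [hβ'def, ← hβ0, zero_div]
        rw [this, ← hβ0, ENNReal.rpow_zero, ENNReal.rpow_zero, ENNReal.rpow_zero, mul_one]
      · have hσ0 : wInt σ R ≠ 0 := fun h => hc1 ⟨hβpos, h⟩
        calc (∑ Q ∈ F, volume (E Q) * (wInt σ Q * (Q.vol)⁻¹)) ^ β'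
            ≤ (Ainf σ * wInt σ R) ^ β' := ENNReal.rpow_le_rpow
              (sum_Ea_le E hE1' hE2 R hσ0 hσt F hF) hβ'0
          _ = Ainf σ ^ β' * wInt σ R ^ β' := ENNReal.mul_rpow_of_nonneg _ _ hβ'0
          _ ≤ Ainf σ ^ β * wInt σ R ^ β' := by
              exact mul_le_mul_left (ENNReal.rpow_le_rpow_of_exponent_le
                (one_le_Ainf R hσ0 hσt) hβ'le) _
    have claim2 : (∑ Q ∈ F, volume (E Q) * (wInt ω Q * (Q.vol)⁻¹)) ^ γ'
        ≤ Ainf ω ^ γ * wInt ω R ^ γ' := by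
      rcases eq_or_lt_of_le hγ with hγ0 | hγpos
      · have : γ' = 0 := by rw [hγ'def, ← hγ0, zero_div]
        rw [this, ← hγ0, ENNReal.rpow_zero, ENNReal.rpow_zero, ENNReal.rpow_zero, mul_one]
      · have hω0 : wInt ω R ≠ 0 := fun h => hc2 ⟨hγpos, h⟩
        calc (∑ Q ∈ F, volume (E Q) * (wInt ω Q * (Q.vol)⁻¹)) ^ γ'
            ≤ (Ainf ω * wInt ω R) ^ γ' := ENNReal.rpow_le_rpow
              (sum_Ea_le E hE1' hE2 R hω0 hωt F hF) hγ'0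
          _ = Ainf ω ^ γ' * wInt ω R ^ γ' := ENNReal.mul_rpow_of_nonneg _ _ hγ'0
          _ ≤ Ainf ω ^ γ * wInt ω R ^ γ' := by
              exact mul_le_mul_left (ENNReal.rpow_le_rpow_of_exponent_le
                (one_le_Ainf R hω0 hωt) hγ'le) _
    -- reduction
    have hred : ∀ Q ∈ F, wInt σ Q ^ β * wInt ω Q ^ γ
        ≤ (wInt σ R ^ (β - β') * wInt ω R ^ (γ - γ')) *
          (wInt σ Q ^ β' * wInt ω Q ^ γ') := by
      intro Q hQ
      have h2 := rpow_le_mul_rpow (wInt_mono (hF Q hQ).2 (w := σ)) hβ'0 hβ'le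
      have h3 := rpow_le_mul_rpow (wInt_mono (hF Q hQ).2 (w := ω)) hγ'0 hγ'le
      calc wInt σ Q ^ β * wInt ω Q ^ γ
          ≤ (wInt σ R ^ (β - β') * wInt σ Q ^ β') *
            (wInt ω R ^ (γ - γ') * wInt ω Q ^ γ') := mul_le_mul' h2 h3
        _ = _ := by ring
    -- the normalized inner sum
    have hinner : ∀ Q ∈ F, wInt σ Q ^ β' * wInt ω Q ^ γ'
        ≤ eta⁻¹ * (volume (E Q) * (wInt σ Q * (Q.vol)⁻¹) ^ β' *
            (wInt ω Q * (Q.vol)⁻¹) ^ γ') := by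
      intro Q hQ
      have ha'z : a' = 0 := by rw [ha'def, ha0, zero_div]
      have h0 : wInt σ Q ^ β' * wInt ω Q ^ γ'
          = Q.vol * (wInt σ Q * (Q.vol)⁻¹) ^ β' * (wInt ω Q * (Q.vol)⁻¹) ^ γ' := by
        have := hvolsplit Q
        rw [ha'z, ENNReal.rpow_zero, one_mul] at this
        exact this
      rw [h0]
      calc Q.vol * (wInt σ Q * (Q.vol)⁻¹) ^ β' * (wInt ω Q * (Q.vol)⁻¹) ^ γ'
          ≤ (eta⁻¹ * volume (E Q)) * (wInt σ Q * (Q.vol)⁻¹) ^ β' *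
              (wInt ω Q * (Q.vol)⁻¹) ^ γ' :=
            mul_le_mul_left (mul_le_mul_left (hsparse Q (hF Q hQ).1) _) _
        _ = _ := by ring
    calc ∑ Q ∈ F, wInt σ Q ^ β * wInt ω Q ^ γ
        ≤ ∑ Q ∈ F, (wInt σ R ^ (β - β') * wInt ω R ^ (γ - γ')) *
            (wInt σ Q ^ β' * wInt ω Q ^ γ') := Finset.sum_le_sum hred
      _ = (wInt σ R ^ (β - β') * wInt ω R ^ (γ - γ')) *
            ∑ Q ∈ F, wInt σ Q ^ β' * wInt ω Q ^ γ' := (Finset.mul_sum _ _ _).symm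
      _ ≤ (wInt σ R ^ (β - β') * wInt ω R ^ (γ - γ')) * (eta⁻¹ *
            ∑ Q ∈ F, volume (E Q) * (wInt σ Q * (Q.vol)⁻¹) ^ β' *
              (wInt ω Q * (Q.vol)⁻¹) ^ γ') := by
          rw [Finset.mul_sum F
            (fun Q => volume (E Q) * (wInt σ Q * (Q.vol)⁻¹) ^ β' * (wInt ω Q * (Q.vol)⁻¹) ^ γ')
            eta⁻¹]
          exact mul_le_mul_right (Finset.sum_le_sum hinner) _
      _ = (wInt σ R ^ (β - β') * wInt ω R ^ (γ - γ')) * (eta⁻¹ *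
            ∑ Q ∈ F, (volume (E Q) * (wInt σ Q * (Q.vol)⁻¹)) ^ β' *
              (volume (E Q) * (wInt ω Q * (Q.vol)⁻¹)) ^ (1 - β')) := by
          rw [Finset.sum_congr rfl hident]
      _ ≤ (wInt σ R ^ (β - β') * wInt ω R ^ (γ - γ')) * (eta⁻¹ *
            ((∑ Q ∈ F, volume (E Q) * (wInt σ Q * (Q.vol)⁻¹)) ^ β' *
              (∑ Q ∈ F, volume (E Q) * (wInt ω Q * (Q.vol)⁻¹)) ^ (1 - β'))) := by
          exact mul_le_mul_right (mul_le_mul_right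
            (holder_sum F _ _ hβ'0 (by linarith)) _) _
      _ ≤ (wInt σ R ^ (β - β') * wInt ω R ^ (γ - γ')) * (eta⁻¹ *
            ((Ainf σ ^ β * wInt σ R ^ β') * (Ainf ω ^ γ * wInt ω R ^ γ'))) := by
          refine mul_le_mul_right (mul_le_mul_right (mul_le_mul' claim1 ?_) _) _
          rw [show (1:ℝ) - β' = γ' by linarith]
          exact claim2
      _ = eta⁻¹ * Ainf σ ^ β * Ainf ω ^ γ *
            ((wInt σ R ^ (β - β') * wInt σ R ^ β') *
              (wInt ω R ^ (γ - γ') * wInt ω R ^ γ')) := by ring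
      _ = eta⁻¹ * Ainf σ ^ β * Ainf ω ^ γ * (wInt σ R ^ β * wInt ω R ^ γ) := by
          rw [rpow_recombine _ hβ'0 hβ'le, rpow_recombine _ hγ'0 hγ'le]
      _ ≤ eta⁻¹ * (1 + Dc) * Ainf σ ^ β * Ainf ω ^ γ *
            (wInt σ R ^ β * wInt ω R ^ γ) := by
          refine mul_le_mul_left (mul_le_mul_left (mul_le_mul_left ?_ _) _) _
          exact le_mul_of_one_le_right zero_le le_self_add

end Frac
end
end
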